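/- arXiv:2210.16655 — 5 statements merged into one kernel-verified Lean document; each statement's English description precedes it below -/
import Mathlib

section
/- Let (X,Y) be a random vector on ℝ² whose law has a jointly continuous, strictly positive probability density function f with respect to Lebesgue measure. Then X and Y are independent if and only if for every choice of quantile splits 0 < p₁ < q₁ < 1 and 0 < p₂ < q₂ < 1, the conditional covariance Cov_A[X,Y] equals 0, where A = {Q_X(p₁) ≤ X ≤ Q_X(q₁)} ∩ {Q_Y(p₂) ≤ Y ≤ Q_Y(q₂)} is the corresponding quantile set. -/
open MeasureTheory ProbabilityTheory Set

/-- Conditional covariance of `X` and `Y` given the event `A`: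
`Cov_A[X,Y] = E[X·Y | A] − E[X | A] · E[Y | A]`, where `E[· | A]` is the expectation
with respect to the conditional probability `P[|A]`. -/
noncomputable def condCov {Ω : Type*} [MeasurableSpace Ω] (P : Measure Ω) (A : Set Ω)
    (X Y : Ω → ℝ) : ℝ :=
  (∫ ω, X ω * Y ω ∂(P[|A])) - (∫ ω, X ω ∂(P[|A])) * (∫ ω, Y ω ∂(P[|A]))

/-- The cumulative distribution function of a real random variable `X` under `P`. -/
noncomputable def cdfOf {Ω : Type*} [MeasurableSpace Ω] (P : Measure Ω) (X : Ω → ℝ) : ℝ → ℝ :=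
  fun x => (P {ω | X ω ≤ x}).toReal

/-- The quantile function of `X` under `P`, i.e. the inverse of its CDF
(well defined on `(0,1)` when the CDF is a bijection onto `(0,1)`). -/
noncomputable def quantileOf {Ω : Type*} [MeasurableSpace Ω] (P : Measure Ω) (X : Ω → ℝ) : ℝ → ℝ :=
  Function.invFun (cdfOf P X)

/-- The quantile set `A = {Q_X(p₁) ≤ X ≤ Q_X(q₁)} ∩ {Q_Y(p₂) ≤ Y ≤ Q_Y(q₂)}`
associated with the quantile splits `p₁ < q₁` and `p₂ < q₂`. -/
noncomputable def quantileSet {Ω : Type*} [MeasurableSpace Ω] (P : Measure Ω) (X Y : Ω → ℝ)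
    (p₁ q₁ p₂ q₂ : ℝ) : Set Ω :=
  {ω | quantileOf P X p₁ ≤ X ω ∧ X ω ≤ quantileOf P X q₁} ∩
    {ω | quantileOf P Y p₂ ≤ Y ω ∧ Y ω ≤ quantileOf P Y q₂}

open scoped ENNReal NNReal

section Auxiliary

open intervalIntegral

lemma hasDerivAt_right_of_cont (p : ℝ → ℝ) (hp : Continuous p) (a b : ℝ) :
    HasDerivAt (fun u => ∫ x in a..u, p x) (p b) b :=
  integral_hasDerivAt_right (hp.intervalIntegrable a b)
    (hp.stronglyMeasurable.stronglyMeasurableAtFilter) hp.continuousAt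

lemma hasDerivAt_left_of_cont (p : ℝ → ℝ) (hp : Continuous p) (a b : ℝ) :
    HasDerivAt (fun u => ∫ x in u..b, p x) (-(p a)) a :=
  integral_hasDerivAt_left (hp.intervalIntegrable a b)
    (hp.stronglyMeasurable.stronglyMeasurableAtFilter) hp.continuousAt

lemma core_lemma (p q r s : ℝ → ℝ) (hp : Continuous p) (hq : Continuous q)
    (hr : Continuous r) (hs : Continuous s)
    (h : ∀ a b : ℝ, (∫ x in a..b, p x) * (∫ x in a..b, q x)
        = (∫ x in a..b, r x) * (∫ x in a..b, s x)) :
    ∀ a b : ℝ, p a * q b + p b * q a = r a * s b + r b * s a := by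
  have step1 : ∀ a b : ℝ,
      p b * (∫ x in a..b, q x) + (∫ x in a..b, p x) * q b
        = r b * (∫ x in a..b, s x) + (∫ x in a..b, r x) * s b := by
    intro a b
    have h1 : HasDerivAt (fun u => (∫ x in a..u, p x) * (∫ x in a..u, q x)
        - (∫ x in a..u, r x) * (∫ x in a..u, s x))
        (p b * (∫ x in a..b, q x) + (∫ x in a..b, p x) * q b
          - (r b * (∫ x in a..b, s x) + (∫ x in a..b, r x) * s b)) b := by
      exact ((hasDerivAt_right_of_cont p hp a b).mul (hasDerivAt_right_of_cont q hq a b)).sub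
        ((hasDerivAt_right_of_cont r hr a b).mul (hasDerivAt_right_of_cont s hs a b))
    have h2 : (fun u => (∫ x in a..u, p x) * (∫ x in a..u, q x)
        - (∫ x in a..u, r x) * (∫ x in a..u, s x)) = fun _ => (0:ℝ) := by
      funext u; rw [h a u]; ring
    rw [h2] at h1
    have := h1.unique (hasDerivAt_const b (0:ℝ))
    linarith
  intro a b
  have h1 : HasDerivAt (fun u => p b * (∫ x in u..b, q x) + (∫ x in u..b, p x) * q b
      - (r b * (∫ x in u..b, s x) + (∫ x in u..b, r x) * s b))
      (p b * (-(q a)) + (-(p a)) * q b - (r b * (-(s a)) + (-(r a)) * s b)) a := by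
    exact (((hasDerivAt_left_of_cont q hq a b).const_mul (p b)).add
      ((hasDerivAt_left_of_cont p hp a b).mul_const (q b))).sub
      (((hasDerivAt_left_of_cont s hs a b).const_mul (r b)).add
      ((hasDerivAt_left_of_cont r hr a b).mul_const (s b)))
  have h2 : (fun u => p b * (∫ x in u..b, q x) + (∫ x in u..b, p x) * q b
      - (r b * (∫ x in u..b, s x) + (∫ x in u..b, r x) * s b)) = fun _ => (0:ℝ) := by
    funext u; rw [step1 u b]; ring
  rw [h2] at h1
  have := h1.unique (hasDerivAt_const a (0:ℝ))
  linarith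

lemma extend_symm (p q r s : ℝ → ℝ)
    (h : ∀ c d : ℝ, c < d → (∫ t in c..d, p t) * (∫ t in c..d, q t)
      = (∫ t in c..d, r t) * (∫ t in c..d, s t)) :
    ∀ c d : ℝ, (∫ t in c..d, p t) * (∫ t in c..d, q t)
      = (∫ t in c..d, r t) * (∫ t in c..d, s t) := by
  intro c d
  rcases lt_trichotomy c d with h1|h1|h1
  · exact h c d h1
  · subst h1; simp
  · simp only [intervalIntegral.integral_symm d c]
    rw [neg_mul_neg, neg_mul_neg]
    exact h d c h1

lemma rank_one (f : ℝ × ℝ → ℝ) (hf : Continuous f)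
    (H : ∀ a b c d : ℝ, a < b → c < d →
      (∫ y in c..d, ∫ x in a..b, x * y * f (x, y)) * (∫ y in c..d, ∫ x in a..b, f (x, y))
        = (∫ y in c..d, ∫ x in a..b, x * f (x, y)) * (∫ y in c..d, ∫ x in a..b, y * f (x, y))) :
    ∀ a b c d : ℝ, f (a, c) * f (b, d) = f (b, c) * f (a, d) := by
  -- Stage 1
  have stage1 : ∀ a b : ℝ, a < b → ∀ σ τ : ℝ,
      (∫ x in a..b, x * f (x, σ)) * (∫ x in a..b, f (x, τ))
        = (∫ x in a..b, x * f (x, τ)) * (∫ x in a..b, f (x, σ)) := by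
    intro a b hab
    set m : ℝ → ℝ := fun t => ∫ x in a..b, f (x, t) with hm
    set n : ℝ → ℝ := fun t => ∫ x in a..b, x * f (x, t) with hn
    have hmc : Continuous m := by
      apply intervalIntegral.continuous_parametric_intervalIntegral_of_continuous'
      exact hf.comp (continuous_swap)
    have hnc : Continuous n := by
      apply intervalIntegral.continuous_parametric_intervalIntegral_of_continuous'
      exact (continuous_snd).mul (hf.comp (continuous_swap))
    have key : ∀ σ τ : ℝ, n σ * m τ = n τ * m σ := by
      have hcore := core_lemma (fun t => t * n t) m n (fun t => t * m t)
        (continuous_id.mul hnc) hmc hnc (continuous_id.mul hmc) ?_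
      · intro σ τ
        have h2 := hcore σ τ
        rcases eq_or_ne σ τ with h3 | h3
        · rw [h3]
        · have h2' : σ * n σ * m τ + τ * n τ * m σ = n σ * (τ * m τ) + n τ * (σ * m σ) := h2
          have h4 : (σ - τ) * (n σ * m τ - n τ * m σ) = 0 := by linear_combination h2'
          rcases mul_eq_zero.mp h4 with h5 | h5
          · exact absurd (sub_eq_zero.mp h5) h3
          · linarith
      · apply extend_symm
        intro c d hcd
        have hH := H a b c d hab hcd
        have e1 : ∀ y : ℝ, (∫ x in a..b, x * y * f (x, y)) = y * n y := by
          intro y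
          rw [hn, ← intervalIntegral.integral_const_mul]
          congr 1; funext x; ring
        have e2 : ∀ y : ℝ, (∫ x in a..b, y * f (x, y)) = y * m y := by
          intro y
          rw [hm, ← intervalIntegral.integral_const_mul]
        simp only [e1, e2] at hH
        exact hH
    intro σ τ; exact key σ τ
  -- Stage 2
  intro a b c d
  set u : ℝ → ℝ := fun x => f (x, c) with hu
  set v : ℝ → ℝ := fun x => f (x, d) with hv
  have huc : Continuous u := hf.comp (continuous_id.prodMk continuous_const)
  have hvc : Continuous v := hf.comp (continuous_id.prodMk continuous_const)
  have hcore := core_lemma (fun x => x * u x) v (fun x => x * v x) u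
    (continuous_id.mul huc) hvc (continuous_id.mul hvc) huc ?_
  · have h2 := hcore a b
    rcases eq_or_ne a b with h3 | h3
    · rw [h3]
    · have h2' : a * u a * v b + b * u b * v a = a * v a * u b + b * v b * u a := h2
      have h4 : (a - b) * (u a * v b - u b * v a) = 0 := by linear_combination h2'
      rcases mul_eq_zero.mp h4 with h5 | h5
      · exact absurd (sub_eq_zero.mp h5) h3
      · show u a * v b = u b * v a
        linarith
  · apply extend_symm
    intro s t hst
    exact stage1 s t hst c d

lemma fubini_box (g : ℝ × ℝ → ℝ) (hg : Continuous g) (a b c d : ℝ) (hab : a ≤ b) (hcd : c ≤ d) :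
    ∫ p in Icc a b ×ˢ Icc c d, g p = ∫ y in c..d, ∫ x in a..b, g (x, y) := by
  have hint : IntegrableOn g (Icc a b ×ˢ Icc c d) (volume : Measure (ℝ × ℝ)) :=
    hg.continuousOn.integrableOn_compact (isCompact_Icc.prod isCompact_Icc)
  rw [Measure.volume_eq_prod] at hint ⊢
  rw [MeasureTheory.setIntegral_prod _ hint]
  have hswap : ∫ x in Icc a b, ∫ y in Icc c d, g (x, y)
      = ∫ y in Icc c d, ∫ x in Icc a b, g (x, y) := by
    apply MeasureTheory.integral_integral_swap
    rw [Measure.prod_restrict]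
    have : (Function.uncurry fun x y => g (x, y)) = g := by
      funext p; simp [Function.uncurry]
    rw [this]
    exact hint
  rw [hswap]
  rw [intervalIntegral.integral_of_le hcd, ← MeasureTheory.integral_Icc_eq_integral_Ioc]
  apply setIntegral_congr_fun measurableSet_Icc
  intro y _
  show (∫ x in Icc a b, g (x, y)) = ∫ x in a..b, g (x, y)
  rw [intervalIntegral.integral_of_le hab, ← MeasureTheory.integral_Icc_eq_integral_Ioc]

end Auxiliary

lemma condCov_zero_of_prod {Ω : Type*} [MeasurableSpace Ω] (P : Measure Ω)
    [IsProbabilityMeasure P] (X Y : Ω → ℝ) (hX : Measurable X) (hY : Measurable Y)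
    (hprod : Measure.map (fun ω => (X ω, Y ω)) P = (Measure.map X P).prod (Measure.map Y P))
    (s t : Set ℝ) (hs : MeasurableSet s) (ht : MeasurableSet t) :
    condCov P ((fun ω => (X ω, Y ω)) ⁻¹' (s ×ˢ t)) X Y = 0 := by
  set T : Ω → ℝ × ℝ := fun ω => (X ω, Y ω) with hT
  have hTm : Measurable T := hX.prodMk hY
  set A : Set Ω := T ⁻¹' (s ×ˢ t) with hA
  by_cases hPA : P A = 0
  · have hres : P.restrict A = 0 := Measure.restrict_eq_zero.mpr hPA
    have : P[|A] = (0 : Measure Ω) := by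
      show (P A)⁻¹ • P.restrict A = 0
      rw [hres, smul_zero]
    simp [condCov, this]
  · haveI : IsProbabilityMeasure (Measure.map X P) := Measure.isProbabilityMeasure_map hX.aemeasurable
    haveI : IsProbabilityMeasure (Measure.map Y P) := Measure.isProbabilityMeasure_map hY.aemeasurable
    set ν₁ : Measure ℝ := Measure.map X P with hν₁
    set ν₂ : Measure ℝ := Measure.map Y P with hν₂
    have hPAval : P A = ν₁ s * ν₂ t := by
      rw [hA, ← Measure.map_apply hTm (hs.prod ht), hprod, Measure.prod_prod]
    -- transport integrals
    have hint : ∀ g : ℝ × ℝ → ℝ, Measurable g →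
        ∫ ω, g (T ω) ∂(P[|A])
          = (P A).toReal⁻¹ * ∫ z, g z ∂((ν₁.restrict s).prod (ν₂.restrict t)) := by
      intro g hg
      have e1 : ∫ ω, g (T ω) ∂(P[|A]) = (P A)⁻¹.toReal * ∫ ω, g (T ω) ∂(P.restrict A) := by
        show ∫ ω, g (T ω) ∂((P A)⁻¹ • P.restrict A) = _
        rw [integral_smul_measure]; rfl
      rw [e1, ENNReal.toReal_inv]
      congr 1
      have e2 : Measure.map T (P.restrict A) = (ν₁.restrict s).prod (ν₂.restrict t) := by
        rw [hA, ← Measure.restrict_map hTm (hs.prod ht), hprod, Measure.prod_restrict]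
      rw [← e2, integral_map hTm.aemeasurable hg.aestronglyMeasurable]
    have hxy := hint (fun z => z.1 * z.2) (measurable_fst.mul measurable_snd)
    have hx := hint (fun z => z.1) measurable_fst
    have hy := hint (fun z => z.2) measurable_snd
    have Ixy : ∫ z, z.1 * z.2 ∂((ν₁.restrict s).prod (ν₂.restrict t))
        = (∫ x, x ∂ν₁.restrict s) * ∫ y, y ∂ν₂.restrict t :=
      integral_prod_mul (fun x : ℝ => x) (fun y : ℝ => y)
    have Ix : ∫ z, z.1 ∂((ν₁.restrict s).prod (ν₂.restrict t))
        = (∫ x, x ∂ν₁.restrict s) * (ν₂ t).toReal := by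
      have := integral_prod_mul (μ := ν₁.restrict s) (ν := ν₂.restrict t)
        (fun x : ℝ => x) (fun _ : ℝ => (1:ℝ))
      simpa [measureReal_def] using this
    have Iy : ∫ z, z.2 ∂((ν₁.restrict s).prod (ν₂.restrict t))
        = (ν₁ s).toReal * ∫ y, y ∂ν₂.restrict t := by
      have := integral_prod_mul (μ := ν₁.restrict s) (ν := ν₂.restrict t)
        (fun _ : ℝ => (1:ℝ)) (fun y : ℝ => y)
      simpa [measureReal_def] using this
    have hs0 : ν₁ s ≠ 0 := fun h0 => hPA (by rw [hPAval, h0, zero_mul])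
    have ht0 : ν₂ t ≠ 0 := fun h0 => hPA (by rw [hPAval, h0, mul_zero])
    have hsR : 0 < (ν₁ s).toReal := ENNReal.toReal_pos hs0 (measure_ne_top _ _)
    have htR : 0 < (ν₂ t).toReal := ENNReal.toReal_pos ht0 (measure_ne_top _ _)
    have hPAtoReal : (P A).toReal = (ν₁ s).toReal * (ν₂ t).toReal := by
      rw [hPAval, ENNReal.toReal_mul]
    show (∫ ω, X ω * Y ω ∂(P[|A])) - (∫ ω, X ω ∂(P[|A])) * (∫ ω, Y ω ∂(P[|A])) = 0
    have eXY : (fun ω => X ω * Y ω) = fun ω => (fun z : ℝ × ℝ => z.1 * z.2) (T ω) := rfl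
    have eX : X = fun ω => (fun z : ℝ × ℝ => z.1) (T ω) := rfl
    have eY : Y = fun ω => (fun z : ℝ × ℝ => z.2) (T ω) := rfl
    rw [eXY, eX, eY, hxy, hx, hy, Ixy, Ix, Iy, hPAtoReal]
    set I1 := ∫ x, x ∂ν₁.restrict s
    set I2 := ∫ y, y ∂ν₂.restrict t
    field_simp
    ring

/-- **Main theorem (Theorem 3.1).** If the random vector `(X,Y)` has a jointly continuous,
strictly positive density `f` on `ℝ²`, then `X` and `Y` are independent if and only if they are
conditionally uncorrelated on every quantile set. -/
theorem independence_iff_condCov_eq_zero_on_quantile_sets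
    {Ω : Type*} [MeasurableSpace Ω] (P : Measure Ω) [IsProbabilityMeasure P]
    (X Y : Ω → ℝ) (hX : Measurable X) (hY : Measurable Y)
    (f : ℝ × ℝ → ℝ) (hf_cont : Continuous f) (hf_pos : ∀ p, 0 < f p)
    (hf_law : Measure.map (fun ω => (X ω, Y ω)) P =
      (volume : Measure (ℝ × ℝ)).withDensity (fun p => ENNReal.ofReal (f p))) :
    IndepFun X Y P ↔
      ∀ p₁ q₁ p₂ q₂ : ℝ, 0 < p₁ → p₁ < q₁ → q₁ < 1 → 0 < p₂ → p₂ < q₂ → q₂ < 1 →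
        condCov P (quantileSet P X Y p₁ q₁ p₂ q₂) X Y = 0 := by
  have hTm : Measurable (fun ω => (X ω, Y ω)) := hX.prodMk hY
  set T : Ω → ℝ × ℝ := fun ω => (X ω, Y ω) with hT
  set μ : Measure (ℝ × ℝ) := volume.withDensity (fun p => ENNReal.ofReal (f p)) with hμdef
  have hμmap : Measure.map T P = μ := hf_law
  haveI hμprob : IsProbabilityMeasure μ := by
    rw [← hμmap]; exact Measure.isProbabilityMeasure_map hTm.aemeasurable
  have hqs : ∀ p₁ q₁ p₂ q₂ : ℝ, quantileSet P X Y p₁ q₁ p₂ q₂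
      = T ⁻¹' ((Icc (quantileOf P X p₁) (quantileOf P X q₁)) ×ˢ
          (Icc (quantileOf P Y p₂) (quantileOf P Y q₂))) := by
    intro p₁ q₁ p₂ q₂
    ext ω
    simp only [quantileSet, Set.mem_inter_iff, Set.mem_setOf_eq, Set.mem_preimage, hT,
      Set.mem_prod, Set.mem_Icc]
  constructor
  · intro hind p₁ q₁ p₂ q₂ _ _ _ _ _ _
    rw [hqs]
    exact condCov_zero_of_prod P X Y hX hY
      ((indepFun_iff_map_prod_eq_prod_map_map hX.aemeasurable hY.aemeasurable).mp hind)
      _ _ measurableSet_Icc measurableSet_Icc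
  · intro h
    -- positivity of μ on sets of positive volume
    have hpos : ∀ s : Set (ℝ × ℝ), MeasurableSet s → volume s ≠ 0 → μ s ≠ 0 := by
      intro s hs hvs h0
      rw [hμdef, withDensity_apply _ hs] at h0
      have hm : Measurable fun p : ℝ × ℝ => ENNReal.ofReal (f p) :=
        ENNReal.measurable_ofReal.comp hf_cont.measurable
      rw [lintegral_eq_zero_iff hm] at h0
      rw [Filter.EventuallyEq, ae_iff] at h0
      simp only [Pi.zero_apply, ENNReal.ofReal_eq_zero, not_le] at h0
      have h1 : {p : ℝ × ℝ | 0 < f p} = Set.univ := by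
        ext p; simp [hf_pos p]
      rw [h1, Measure.restrict_apply_univ] at h0
      exact hvs h0
    have hvol_rect : ∀ (s t : Set ℝ), volume s ≠ 0 → volume t ≠ 0 → volume (s ×ˢ t) ≠ 0 := by
      intro s t h1 h2
      rw [Measure.volume_eq_prod, Measure.prod_prod]
      exact mul_ne_zero h1 h2
    -- the CDF of X
    have hcdfX : ∀ x : ℝ, cdfOf P X x = (μ (Iic x ×ˢ (univ : Set ℝ))).toReal := by
      intro x
      have e : P {ω | X ω ≤ x} = μ (Iic x ×ˢ (univ : Set ℝ)) := by
        rw [← hμmap, Measure.map_apply hTm (measurableSet_Iic.prod MeasurableSet.univ)]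
        congr 1; ext ω; simp [hT]
      show (P {ω | X ω ≤ x}).toReal = _
      rw [e]
    have hcdfY : ∀ y : ℝ, cdfOf P Y y = (μ ((univ : Set ℝ) ×ˢ Iic y)).toReal := by
      intro y
      have e : P {ω | Y ω ≤ y} = μ ((univ : Set ℝ) ×ˢ Iic y) := by
        rw [← hμmap, Measure.map_apply hTm (MeasurableSet.univ.prod measurableSet_Iic)]
        congr 1; ext ω; simp [hT]
      show (P {ω | Y ω ≤ y}).toReal = _
      rw [e]
    have hXmono : StrictMono (cdfOf P X) := by
      intro x y hxy
      rw [hcdfX x, hcdfX y]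
      apply ENNReal.toReal_strict_mono (measure_ne_top μ _)
      have hsplit : (Iic y ×ˢ (univ : Set ℝ)) = (Iic x ×ˢ univ) ∪ (Ioc x y ×ˢ univ) := by
        rw [← union_prod, Iic_union_Ioc_eq_Iic hxy.le]
      rw [hsplit, measure_union (Set.disjoint_prod.mpr (Or.inl (Iic_disjoint_Ioc le_rfl)))
        (measurableSet_Ioc.prod MeasurableSet.univ)]
      exact ENNReal.lt_add_right (measure_ne_top μ _)
        (hpos _ (measurableSet_Ioc.prod MeasurableSet.univ)
          (hvol_rect _ _
            (by rw [Real.volume_Ioc]; exact (ENNReal.ofReal_pos.mpr (sub_pos.mpr hxy)).ne')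
            (by rw [Real.volume_univ]; exact ENNReal.top_ne_zero)))
    have hYmono : StrictMono (cdfOf P Y) := by
      intro x y hxy
      rw [hcdfY x, hcdfY y]
      apply ENNReal.toReal_strict_mono (measure_ne_top μ _)
      have hsplit : ((univ : Set ℝ) ×ˢ Iic y) = (univ ×ˢ Iic x) ∪ (univ ×ˢ Ioc x y) := by
        rw [← prod_union, Iic_union_Ioc_eq_Iic hxy.le]
      rw [hsplit, measure_union (Set.disjoint_prod.mpr (Or.inr (Iic_disjoint_Ioc le_rfl)))
        (MeasurableSet.univ.prod measurableSet_Ioc)]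
      exact ENNReal.lt_add_right (measure_ne_top μ _)
        (hpos _ (MeasurableSet.univ.prod measurableSet_Ioc)
          (hvol_rect _ _
            (by rw [Real.volume_univ]; exact ENNReal.top_ne_zero)
            (by rw [Real.volume_Ioc]; exact (ENNReal.ofReal_pos.mpr (sub_pos.mpr hxy)).ne')))
    have hXpos : ∀ x : ℝ, 0 < cdfOf P X x := by
      intro x
      rw [hcdfX x]
      exact ENNReal.toReal_pos
        (hpos _ (measurableSet_Iic.prod MeasurableSet.univ)
          (hvol_rect _ _ (by rw [Real.volume_Iic]; exact ENNReal.top_ne_zero)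
            (by rw [Real.volume_univ]; exact ENNReal.top_ne_zero)))
        (measure_ne_top μ _)
    have hYpos : ∀ y : ℝ, 0 < cdfOf P Y y := by
      intro y
      rw [hcdfY y]
      exact ENNReal.toReal_pos
        (hpos _ (MeasurableSet.univ.prod measurableSet_Iic)
          (hvol_rect _ _ (by rw [Real.volume_univ]; exact ENNReal.top_ne_zero)
            (by rw [Real.volume_Iic]; exact ENNReal.top_ne_zero)))
        (measure_ne_top μ _)
    have hXlt1 : ∀ x : ℝ, cdfOf P X x < 1 := by
      intro x
      rw [hcdfX x]
      have h2 : μ (Iic x ×ˢ (univ : Set ℝ)) < 1 := by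
        have hu : (univ : Set (ℝ × ℝ)) = (Iic x ×ˢ univ) ∪ (Ioi x ×ˢ univ) := by
          rw [← union_prod, Iic_union_Ioi]
          exact (univ_prod_univ).symm
        have h3 : (1 : ℝ≥0∞) = μ (Iic x ×ˢ univ) + μ (Ioi x ×ˢ univ) := by
          rw [← measure_union (Set.disjoint_prod.mpr (Or.inl (Iic_disjoint_Ioi le_rfl)))
            (measurableSet_Ioi.prod MeasurableSet.univ), ← hu]
          exact (measure_univ).symm
        rw [h3]
        exact ENNReal.lt_add_right (measure_ne_top μ _)
          (hpos _ (measurableSet_Ioi.prod MeasurableSet.univ)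
            (hvol_rect _ _ (by rw [Real.volume_Ioi]; exact ENNReal.top_ne_zero)
              (by rw [Real.volume_univ]; exact ENNReal.top_ne_zero)))
      have := ENNReal.toReal_strict_mono (by simp) h2
      simpa using this
    have hYlt1 : ∀ y : ℝ, cdfOf P Y y < 1 := by
      intro y
      rw [hcdfY y]
      have h2 : μ ((univ : Set ℝ) ×ˢ Iic y) < 1 := by
        have hu : (univ : Set (ℝ × ℝ)) = (univ ×ˢ Iic y) ∪ (univ ×ˢ Ioi y) := by
          rw [← prod_union, Iic_union_Ioi]
          exact (univ_prod_univ).symm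
        have h3 : (1 : ℝ≥0∞) = μ (univ ×ˢ Iic y) + μ (univ ×ˢ Ioi y) := by
          rw [← measure_union (Set.disjoint_prod.mpr (Or.inr (Iic_disjoint_Ioi le_rfl)))
            (MeasurableSet.univ.prod measurableSet_Ioi), ← hu]
          exact (measure_univ).symm
        rw [h3]
        exact ENNReal.lt_add_right (measure_ne_top μ _)
          (hpos _ (MeasurableSet.univ.prod measurableSet_Ioi)
            (hvol_rect _ _ (by rw [Real.volume_univ]; exact ENNReal.top_ne_zero)
              (by rw [Real.volume_Ioi]; exact ENNReal.top_ne_zero)))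
      have := ENNReal.toReal_strict_mono (by simp) h2
      simpa using this
    have hqXinv : ∀ x : ℝ, quantileOf P X (cdfOf P X x) = x := fun x =>
      Function.leftInverse_invFun hXmono.injective x
    have hqYinv : ∀ y : ℝ, quantileOf P Y (cdfOf P Y y) = y := fun y =>
      Function.leftInverse_invFun hYmono.injective y
    -- the key rectangle identity
    have key : ∀ a b c d : ℝ, a < b → c < d →
        (∫ y in c..d, ∫ x in a..b, x * y * f (x, y)) * (∫ y in c..d, ∫ x in a..b, f (x, y))
          = (∫ y in c..d, ∫ x in a..b, x * f (x, y))
            * (∫ y in c..d, ∫ x in a..b, y * f (x, y)) := by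
      intro a b c d hab hcd
      have h0 := h (cdfOf P X a) (cdfOf P X b) (cdfOf P Y c) (cdfOf P Y d)
        (hXpos a) (hXmono hab) (hXlt1 b) (hYpos c) (hYmono hcd) (hYlt1 d)
      rw [hqs, hqXinv a, hqXinv b, hqYinv c, hqYinv d] at h0
      set S : Set (ℝ × ℝ) := Icc a b ×ˢ Icc c d with hS
      have hSm : MeasurableSet S := measurableSet_Icc.prod measurableSet_Icc
      set A : Set Ω := T ⁻¹' S with hA
      have hPA : P A = μ S := by
        rw [hA, ← hμmap, Measure.map_apply hTm hSm]
      have hPAne : P A ≠ 0 := by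
        rw [hPA]
        exact hpos S hSm (hvol_rect _ _
          (by rw [Real.volume_Icc]; exact (ENNReal.ofReal_pos.mpr (sub_pos.mpr hab)).ne')
          (by rw [Real.volume_Icc]; exact (ENNReal.ofReal_pos.mpr (sub_pos.mpr hcd)).ne'))
      have hIg : ∀ g : ℝ × ℝ → ℝ, Continuous g →
          ∫ ω, g (T ω) ∂(P.restrict A)
            = ∫ y in c..d, ∫ x in a..b, g (x, y) * f (x, y) := by
        intro g hg
        have e2 : Measure.map T (P.restrict A) = μ.restrict S := by
          rw [hA, ← Measure.restrict_map hTm hSm, hμmap]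
        calc ∫ ω, g (T ω) ∂(P.restrict A)
            = ∫ z, g z ∂(Measure.map T (P.restrict A)) :=
              (integral_map hTm.aemeasurable hg.aestronglyMeasurable).symm
          _ = ∫ z in S, g z ∂μ := by rw [e2]
          _ = ∫ z in S, (Real.toNNReal (f z)) • g z ∂volume := by
              rw [hμdef]
              exact setIntegral_withDensity_eq_setIntegral_smul
                (measurable_real_toNNReal.comp hf_cont.measurable) g hSm
          _ = ∫ z in S, g z * f z ∂volume := by
              apply setIntegral_congr_fun hSm
              intro z _
              show (Real.toNNReal (f z) : ℝ≥0) • g z = g z * f z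
              rw [NNReal.smul_def, Real.coe_toNNReal _ (hf_pos z).le, smul_eq_mul, mul_comm]
          _ = ∫ y in c..d, ∫ x in a..b, g (x, y) * f (x, y) := by
              rw [hS]
              exact fubini_box (fun z => g z * f z) (hg.mul hf_cont) a b c d hab.le hcd.le
      have hcd1 : (P A).toReal = ∫ y in c..d, ∫ x in a..b, f (x, y) := by
        have h1 := hIg (fun _ => (1:ℝ)) continuous_const
        simp only [one_mul] at h1
        rw [← h1, integral_const, measureReal_def, Measure.restrict_apply_univ, smul_eq_mul, mul_one]
      have hcondI : ∀ g : ℝ × ℝ → ℝ, Continuous g →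
          ∫ ω, g (T ω) ∂(P[|A])
            = ((P A).toReal)⁻¹ * ∫ y in c..d, ∫ x in a..b, g (x, y) * f (x, y) := by
        intro g hg
        have e1 : ∫ ω, g (T ω) ∂(P[|A]) = (P A)⁻¹.toReal * ∫ ω, g (T ω) ∂(P.restrict A) := by
          show ∫ ω, g (T ω) ∂((P A)⁻¹ • P.restrict A) = _
          rw [integral_smul_measure]; rfl
        rw [e1, ENNReal.toReal_inv, hIg g hg]
      have e1 : ∫ ω, X ω * Y ω ∂(P[|A])
          = ((P A).toReal)⁻¹ * ∫ y in c..d, ∫ x in a..b, x * y * f (x, y) :=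
        hcondI (fun z => z.1 * z.2) (continuous_fst.mul continuous_snd)
      have e2 : ∫ ω, X ω ∂(P[|A])
          = ((P A).toReal)⁻¹ * ∫ y in c..d, ∫ x in a..b, x * f (x, y) :=
        hcondI (fun z => z.1) continuous_fst
      have e3 : ∫ ω, Y ω ∂(P[|A])
          = ((P A).toReal)⁻¹ * ∫ y in c..d, ∫ x in a..b, y * f (x, y) :=
        hcondI (fun z => z.2) continuous_snd
      simp only [condCov] at h0
      rw [e1, e2, e3] at h0
      have htRpos : 0 < (P A).toReal := ENNReal.toReal_pos hPAne (measure_ne_top P A)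
      rw [← hcd1]
      set tR := (P A).toReal
      set Jxy := ∫ y in c..d, ∫ x in a..b, x * y * f (x, y)
      set Jx := ∫ y in c..d, ∫ x in a..b, x * f (x, y)
      set Jy := ∫ y in c..d, ∫ x in a..b, y * f (x, y)
      have htne : tR ≠ 0 := ne_of_gt htRpos
      have h0' : tR⁻¹ * Jxy - tR⁻¹ * Jx * (tR⁻¹ * Jy) = 0 := h0
      field_simp at h0'
      have h5 : tR * (Jxy * tR - Jx * Jy) = 0 := by linear_combination tR * h0'
      rcases mul_eq_zero.mp h5 with h6 | h6
      · exact absurd h6 htne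
      · linarith [sub_eq_zero.mp h6]
    -- rank one structure of the density
    have hrank := rank_one f hf_cont key
    have hgc : Continuous (fun x : ℝ => f (x, 0)) :=
      hf_cont.comp (continuous_id.prodMk continuous_const)
    have hkc : Continuous (fun y : ℝ => f (0, y) / f (0, 0)) :=
      (hf_cont.comp (continuous_const.prodMk continuous_id)).div_const _
    have hfact : ∀ z : ℝ × ℝ, f z = f (z.1, 0) * (f (0, z.2) / f (0, 0)) := by
      intro z
      have h1 := hrank z.1 0 z.2 0
      have h2 : f (0, 0) ≠ 0 := (hf_pos _).ne'
      have h3 : ((z.1 : ℝ), (z.2 : ℝ)) = z := rfl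
      rw [h3] at h1
      rw [← mul_div_assoc, eq_div_iff h2]
      linear_combination h1
    set G : Set ℝ → ℝ≥0∞ := fun s => ∫⁻ x in s, ENNReal.ofReal (f (x, 0)) with hG
    set K : Set ℝ → ℝ≥0∞ := fun t => ∫⁻ y in t, ENNReal.ofReal (f (0, y) / f (0, 0)) with hK
    have hGK : ∀ (s t : Set ℝ), MeasurableSet s → MeasurableSet t →
        μ (s ×ˢ t) = G s * K t := by
      intro s t hs ht
      rw [hμdef, withDensity_apply _ (hs.prod ht)]
      have e : (fun z : ℝ × ℝ => ENNReal.ofReal (f z))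
          = fun z => ENNReal.ofReal (f (z.1, 0)) * ENNReal.ofReal (f (0, z.2) / f (0, 0)) := by
        funext z
        rw [hfact z, ENNReal.ofReal_mul (hf_pos _).le]
      rw [e, Measure.volume_eq_prod, ← Measure.prod_restrict]
      have hma : AEMeasurable (fun x : ℝ => ENNReal.ofReal (f (x, 0))) (volume.restrict s) :=
        (ENNReal.measurable_ofReal.comp hgc.measurable).aemeasurable
      have hmb : AEMeasurable (fun y : ℝ => ENNReal.ofReal (f (0, y) / f (0, 0)))
          (volume.restrict t) :=
        (ENNReal.measurable_ofReal.comp hkc.measurable).aemeasurable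
      exact lintegral_prod_mul hma hmb
    have hone : G univ * K univ = 1 := by
      rw [← hGK univ univ MeasurableSet.univ MeasurableSet.univ, univ_prod_univ]
      exact measure_univ
    haveI : IsProbabilityMeasure (Measure.map X P) := Measure.isProbabilityMeasure_map hX.aemeasurable
    haveI : IsProbabilityMeasure (Measure.map Y P) := Measure.isProbabilityMeasure_map hY.aemeasurable
    have hmapX : ∀ s : Set ℝ, MeasurableSet s →
        Measure.map X P s = μ (s ×ˢ (univ : Set ℝ)) := by
      intro s hs
      rw [Measure.map_apply hX hs, ← hμmap, Measure.map_apply hTm (hs.prod MeasurableSet.univ)]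
      congr 1; ext ω; simp [hT]
    have hmapY : ∀ t : Set ℝ, MeasurableSet t →
        Measure.map Y P t = μ ((univ : Set ℝ) ×ˢ t) := by
      intro t ht
      rw [Measure.map_apply hY ht, ← hμmap, Measure.map_apply hTm (MeasurableSet.univ.prod ht)]
      congr 1; ext ω; simp [hT]
    have hprodEq : (Measure.map X P).prod (Measure.map Y P) = Measure.map T P := by
      apply Measure.prod_eq
      intro s t hs ht
      rw [hμmap, hGK s t hs ht, hmapX s hs, hmapY t ht, hGK s univ hs MeasurableSet.univ,
        hGK univ t MeasurableSet.univ ht]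
      calc G s * K t = G s * K t * (G univ * K univ) := by rw [hone, mul_one]
        _ = G s * K univ * (G univ * K t) := by ring
    exact (indepFun_iff_map_prod_eq_prod_map_map hX.aemeasurable hY.aemeasurable).mpr
      hprodEq.symm
end

section
/- Let X and Y be real-valued random variables that are independent, and let A = {X ∈ I} ∩ {Y ∈ J}, where I and J are bounded closed intervals with P(A) > 0. Then the conditional covariance Cov_A[X,Y] equals 0. -/
open MeasureTheory ProbabilityTheory Set

private lemma phi_meas (a b : ℝ) :
    Measurable (fun x : ℝ => x * (Set.Icc a b).indicator (1 : ℝ → ℝ) x) :=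
  measurable_id.mul (measurable_one.indicator measurableSet_Icc)

private lemma phi_bound (a b x : ℝ) :
    ‖x * (Set.Icc a b).indicator (1 : ℝ → ℝ) x‖ ≤ max |a| |b| := by
  by_cases hx : x ∈ Set.Icc a b
  · simp only [Set.indicator_of_mem hx, Pi.one_apply, mul_one, Real.norm_eq_abs]
    rcases hx with ⟨h1, h2⟩
    rcases abs_cases x with ⟨he, _⟩ | ⟨he, _⟩
    · rw [he]; exact le_trans (le_trans h2 (le_abs_self b)) (le_max_right _ _)
    · rw [he]; exact le_trans (le_trans (neg_le_neg h1) (neg_le_abs a)) (le_max_left _ _)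
  · simp only [Set.indicator_of_notMem hx, mul_zero, norm_zero]
    positivity

private lemma phi_integrable {Ω : Type*} [MeasurableSpace Ω] (P : Measure Ω)
    [IsProbabilityMeasure P] (X : Ω → ℝ) (hX : Measurable X) (a b : ℝ) :
    Integrable (fun ω => X ω * (Set.Icc a b).indicator (1 : ℝ → ℝ) (X ω)) P := by
  refine Integrable.mono' (integrable_const (max |a| |b|))
    ((phi_meas a b).comp hX).aestronglyMeasurable ?_
  exact Filter.Eventually.of_forall fun ω => phi_bound a b (X ω)

/-- The easy direction of the main theorem: if `X` and `Y` are independent, then they are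
conditionally uncorrelated on every product set `A = {X ∈ I} ∩ {Y ∈ J}` of bounded closed
intervals with `P(A) > 0`. -/
theorem condCov_eq_zero_of_indepFun
    {Ω : Type*} [MeasurableSpace Ω] (P : Measure Ω) [IsProbabilityMeasure P]
    (X Y : Ω → ℝ) (hX : Measurable X) (hY : Measurable Y)
    (hindep : IndepFun X Y P)
    (a b c d : ℝ) (A : Set Ω)
    (hA : A = X ⁻¹' (Set.Icc a b) ∩ Y ⁻¹' (Set.Icc c d))
    (hPA : 0 < P A) :
    condCov P A X Y = 0 := by
  classical
  set B : Set Ω := X ⁻¹' (Set.Icc a b) with hB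
  set C : Set Ω := Y ⁻¹' (Set.Icc c d) with hC
  have hmB : MeasurableSet B := hX measurableSet_Icc
  have hmC : MeasurableSet C := hY measurableSet_Icc
  have hmA : MeasurableSet A := hA ▸ hmB.inter hmC
  -- φ∘X and ψ∘Y
  set f : Ω → ℝ := fun ω => X ω * (Set.Icc a b).indicator (1 : ℝ → ℝ) (X ω) with hf
  set g : Ω → ℝ := fun ω => Y ω * (Set.Icc c d).indicator (1 : ℝ → ℝ) (Y ω) with hg
  set χB : Ω → ℝ := fun ω => (Set.Icc a b).indicator (1 : ℝ → ℝ) (X ω) with hχB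
  set χC : Ω → ℝ := fun ω => (Set.Icc c d).indicator (1 : ℝ → ℝ) (Y ω) with hχC
  have hfInt : Integrable f P := phi_integrable P X hX a b
  have hgInt : Integrable g P := phi_integrable P Y hY c d
  have hχBeq : χB = B.indicator (fun _ => (1:ℝ)) := by
    funext ω
    by_cases h : ω ∈ B
    · simp [hχB, hB, Set.indicator_of_mem, h, Set.mem_preimage.mp h]
    · have : X ω ∉ Set.Icc a b := h
      simp [hχB, Set.indicator_of_notMem, h, this]
  have hχCeq : χC = C.indicator (fun _ => (1:ℝ)) := by
    funext ω
    by_cases h : ω ∈ C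
    · simp [hχC, hC, Set.indicator_of_mem, h, Set.mem_preimage.mp h]
    · have : Y ω ∉ Set.Icc c d := h
      simp [hχC, Set.indicator_of_notMem, h, this]
  have hχBInt : Integrable χB P := by
    rw [hχBeq]; exact (integrable_const (1:ℝ)).indicator hmB
  have hχCInt : Integrable χC P := by
    rw [hχCeq]; exact (integrable_const (1:ℝ)).indicator hmC
  have hχBint : ∫ ω, χB ω ∂P = (P B).toReal := by
    rw [hχBeq, integral_indicator hmB]; simp; rfl
  have hχCint : ∫ ω, χC ω ∂P = (P C).toReal := by
    rw [hχCeq, integral_indicator hmC]; simp; rfl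
  -- independence of composed functions
  have hfg : IndepFun f g P := hindep.comp (phi_meas a b) (phi_meas c d)
  have hfχC : IndepFun f χC P :=
    hindep.comp (phi_meas a b) (measurable_one.indicator measurableSet_Icc)
  have hχBg : IndepFun χB g P :=
    hindep.comp (measurable_one.indicator measurableSet_Icc) (phi_meas c d)
  -- product structure of A
  have hPAmul : P A = P B * P C := by
    rw [hA]
    exact hindep.measure_inter_preimage_eq_mul _ _ measurableSet_Icc measurableSet_Icc
  -- rewrite set integrals
  have keyXY : ∫ ω in A, X ω * Y ω ∂P = (∫ ω, f ω ∂P) * ∫ ω, g ω ∂P := by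
    rw [← integral_indicator hmA]
    have : A.indicator (fun ω => X ω * Y ω) = f * g := by
      funext ω
      by_cases h : ω ∈ A
      · obtain ⟨h1, h2⟩ := hA ▸ h
        simp only [Pi.mul_apply, hf, hg, Set.indicator_of_mem h,
          Set.indicator_of_mem (Set.mem_preimage.mp h1),
          Set.indicator_of_mem (Set.mem_preimage.mp h2), Pi.one_apply, mul_one]
      · rw [Set.indicator_of_notMem h]
        rw [hA] at h
        rcases not_and_or.mp ((Set.mem_inter_iff ω _ _).not.mp h) with h' | h'
        · have hz : (Set.Icc a b).indicator (1 : ℝ → ℝ) (X ω) = 0 :=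
            Set.indicator_of_notMem (fun hm => h' (Set.mem_preimage.mpr hm)) _
          simp [hf, hg, hz]
        · have hz : (Set.Icc c d).indicator (1 : ℝ → ℝ) (Y ω) = 0 :=
            Set.indicator_of_notMem (fun hm => h' (Set.mem_preimage.mpr hm)) _
          simp [hf, hg, hz]
    rw [this, hfg.integral_mul_eq_mul_integral hfInt.aestronglyMeasurable hgInt.aestronglyMeasurable]
  have keyX : ∫ ω in A, X ω ∂P = (∫ ω, f ω ∂P) * (P C).toReal := by
    rw [← integral_indicator hmA]
    have : A.indicator X = f * χC := by
      funext ω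
      by_cases h : ω ∈ A
      · obtain ⟨h1, h2⟩ := hA ▸ h
        simp only [Pi.mul_apply, hf, hχC, Set.indicator_of_mem h,
          Set.indicator_of_mem (Set.mem_preimage.mp h1),
          Set.indicator_of_mem (Set.mem_preimage.mp h2), Pi.one_apply, mul_one]
      · rw [Set.indicator_of_notMem h]
        rw [hA] at h
        rcases not_and_or.mp ((Set.mem_inter_iff ω _ _).not.mp h) with h' | h'
        · have hz : (Set.Icc a b).indicator (1 : ℝ → ℝ) (X ω) = 0 :=
            Set.indicator_of_notMem (fun hm => h' (Set.mem_preimage.mpr hm)) _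
          simp [hf, hχC, hz]
        · have hz : (Set.Icc c d).indicator (1 : ℝ → ℝ) (Y ω) = 0 :=
            Set.indicator_of_notMem (fun hm => h' (Set.mem_preimage.mpr hm)) _
          simp [hf, hχC, hz]
    rw [this, hfχC.integral_mul_eq_mul_integral hfInt.aestronglyMeasurable hχCInt.aestronglyMeasurable, hχCint]
  have keyY : ∫ ω in A, Y ω ∂P = (P B).toReal * ∫ ω, g ω ∂P := by
    rw [← integral_indicator hmA]
    have : A.indicator Y = χB * g := by
      funext ω
      by_cases h : ω ∈ A
      · obtain ⟨h1, h2⟩ := hA ▸ h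
        simp only [Pi.mul_apply, hg, hχB, Set.indicator_of_mem h,
          Set.indicator_of_mem (Set.mem_preimage.mp h1),
          Set.indicator_of_mem (Set.mem_preimage.mp h2), Pi.one_apply, one_mul, mul_one]
      · rw [Set.indicator_of_notMem h]
        rw [hA] at h
        rcases not_and_or.mp ((Set.mem_inter_iff ω _ _).not.mp h) with h' | h'
        · have hz : (Set.Icc a b).indicator (1 : ℝ → ℝ) (X ω) = 0 :=
            Set.indicator_of_notMem (fun hm => h' (Set.mem_preimage.mpr hm)) _
          simp [hg, hχB, hz]
        · have hz : (Set.Icc c d).indicator (1 : ℝ → ℝ) (Y ω) = 0 :=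
            Set.indicator_of_notMem (fun hm => h' (Set.mem_preimage.mpr hm)) _
          simp [hg, hχB, hz]
    rw [this, hχBg.integral_mul_eq_mul_integral hχBInt.aestronglyMeasurable hgInt.aestronglyMeasurable, hχBint]
  -- conditional integrals
  have hcond : ∀ h : Ω → ℝ, ∫ ω, h ω ∂(P[|A]) = (P A).toReal⁻¹ * ∫ ω in A, h ω ∂P := by
    intro h
    rw [ProbabilityTheory.cond, integral_smul_measure, ENNReal.toReal_inv, smul_eq_mul]
  -- real-number bookkeeping
  set pA := (P A).toReal with hpA
  set pB := (P B).toReal with hpB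
  set pC := (P C).toReal with hpC
  have hAfin : P A ≠ ⊤ := (measure_lt_top P A).ne
  have hpA0 : pA ≠ 0 := ENNReal.toReal_ne_zero.mpr ⟨hPA.ne', hAfin⟩
  have hpAmul : pA = pB * pC := by
    rw [hpA, hPAmul, ENNReal.toReal_mul]
  unfold condCov
  rw [hcond, hcond, hcond, keyXY, keyX, keyY, hpAmul]
  have hpB0 : pB ≠ 0 := fun h => hpA0 (by rw [hpAmul, h, zero_mul])
  have hpC0 : pC ≠ 0 := fun h => hpA0 (by rw [hpAmul, h, mul_zero])
  field_simp
  ring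
end

section
/- Let (X,Y) be a random vector on ℝ² whose law has a jointly continuous, strictly positive probability density function f. Suppose that for every choice of quantile splits 0 < p₁ < q₁ < 1 and 0 < p₂ < q₂ < 1, the conditional covariance Cov_A[X,Y] on the corresponding quantile set A equals 0. Then for all real numbers x₁, x₂, y₁, y₂ one has f(x₁,y₁)·f(x₂,y₂) = f(x₁,y₂)·f(x₂,y₁). -/
open MeasureTheory ProbabilityTheory Set
open scoped Topology ENNReal

lemma aux_inner_cont {g : ℝ → ℝ → ℝ} (hg : Continuous fun p : ℝ × ℝ => g p.1 p.2) (c d : ℝ) :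
    Continuous (fun s : ℝ => ∫ t in c..d, g s t) :=
  intervalIntegral.continuous_parametric_intervalIntegral_of_continuous'
    (f := fun s t => g s t) (by exact hg) c d

lemma aux_slice_cont {g : ℝ → ℝ → ℝ} (hg : Continuous fun p : ℝ × ℝ => g p.1 p.2) (s : ℝ) :
    Continuous (fun t : ℝ => g s t) := by
  have h := hg.comp (Continuous.prodMk_right s)
  exact h

lemma aux_W_sub1 {g : ℝ → ℝ → ℝ} (hg : Continuous fun p : ℝ × ℝ => g p.1 p.2) (a b c d : ℝ) :
    (∫ s in a..b, ∫ t in c..d, g s t) =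
      (∫ s in (0:ℝ)..b, ∫ t in c..d, g s t) - ∫ s in (0:ℝ)..a, ∫ t in c..d, g s t := by
  have h := fun u v : ℝ => ((aux_inner_cont hg c d).intervalIntegrable u v (μ := volume))
  have := intervalIntegral.integral_add_adjacent_intervals (h 0 a) (h a b)
  linarith

lemma aux_W_sub2 {g : ℝ → ℝ → ℝ} (hg : Continuous fun p : ℝ × ℝ => g p.1 p.2) (a b c d : ℝ) :
    (∫ s in a..b, ∫ t in c..d, g s t) =
      (∫ s in a..b, ∫ t in (0:ℝ)..d, g s t) - ∫ s in a..b, ∫ t in (0:ℝ)..c, g s t := by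
  rw [← intervalIntegral.integral_sub ((aux_inner_cont hg 0 d).intervalIntegrable a b (μ := volume))
    ((aux_inner_cont hg 0 c).intervalIntegrable a b (μ := volume))]
  refine intervalIntegral.integral_congr fun s _ => ?_
  have h := fun u v : ℝ => ((aux_slice_cont hg s).intervalIntegrable u v (μ := volume))
  have := intervalIntegral.integral_add_adjacent_intervals (h 0 c) (h c d)
  linarith

lemma aux_W_flip1 (g : ℝ → ℝ → ℝ) (a b c d : ℝ) :
    (∫ s in a..b, ∫ t in c..d, g s t) = -∫ s in b..a, ∫ t in c..d, g s t :=
  intervalIntegral.integral_symm b a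

lemma aux_W_flip2 (g : ℝ → ℝ → ℝ) (a b c d : ℝ) :
    (∫ s in a..b, ∫ t in c..d, g s t) = -∫ s in a..b, ∫ t in d..c, g s t := by
  rw [show (∫ s in a..b, ∫ t in d..c, g s t) = ∫ s in a..b, -∫ t in c..d, g s t from
    intervalIntegral.integral_congr fun s _ => intervalIntegral.integral_symm c d,
    intervalIntegral.integral_neg, neg_neg]

lemma aux_polar8 (A B C D E F G H : ℝ → ℝ)
    (h : ∀ u v : ℝ, (A v - A u) * (B v - B u) + (C v - C u) * (D v - D u)
        = (E v - E u) * (F v - F u) + (G v - G u) * (H v - H u)) :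
    ∀ a b a' b' : ℝ,
      (A b - A a) * (B b' - B a') + (B b - B a) * (A b' - A a')
        + (C b - C a) * (D b' - D a') + (D b - D a) * (C b' - C a')
        - (E b - E a) * (F b' - F a') - (F b - F a) * (E b' - E a')
        - (G b - G a) * (H b' - H a') - (H b - H a) * (G b' - G a') = 0 := by
  intro a b a' b'
  have key : ∀ u v : ℝ, A u * B v + B u * A v + C u * D v + D u * C v
      - E u * F v - F u * E v - G u * H v - H u * G v
      = ((A u * B u + B u * A u + C u * D u + D u * C u
          - E u * F u - F u * E u - G u * H u - H u * G u)
        + (A v * B v + B v * A v + C v * D v + D v * C v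
          - E v * F v - F v * E v - G v * H v - H v * G v)) / 2 := by
    intro u v
    linear_combination - h u v
  linear_combination key b b' - key a b' - key b a' + key a a'
lemma aux_tendsto_box {g : ℝ → ℝ → ℝ} (hg : Continuous fun p : ℝ × ℝ => g p.1 p.2) (x y : ℝ) :
    Filter.Tendsto (fun ε : ℝ => (∫ s in x..x+ε, ∫ t in y..y+ε, g s t) / (ε*ε))
      (𝓝[>] 0) (𝓝 (g x y)) := by
  rw [Metric.tendsto_nhdsWithin_nhds]
  intro δ hδ
  obtain ⟨r, hr, hball⟩ := Metric.continuousAt_iff.mp (hg.continuousAt (x := (x, y))) (δ/2)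
    (by linarith)
  refine ⟨min r 1, by positivity, fun ε hε hd => ?_⟩
  have hε0 : 0 < ε := hε
  have hεr : ε < r := by
    have h1 : |ε| < min r 1 := by simpa [Real.dist_eq] using hd
    have h2 := abs_lt.mp h1
    have h3 := lt_min_iff.mp h2.2
    linarith [h3.1]
  have hbound : ∀ s ∈ Set.uIcc x (x+ε), ∀ t ∈ Set.uIcc y (y+ε),
      |g s t - g x y| ≤ δ/2 := by
    intro s hs t ht
    rw [Set.uIcc_of_le (by linarith)] at hs ht
    have hdist : dist (s, t) (x, y) < r := by
      rw [Prod.dist_eq]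
      simp only [Real.dist_eq]
      rw [max_lt_iff]
      constructor <;> rw [abs_lt] <;> constructor <;>
        first
        | linarith [hs.1, hs.2]
        | linarith [ht.1, ht.2]
    have hb2 := hball hdist
    simp only [Real.dist_eq] at hb2
    exact le_of_lt hb2
  have hginteg : ∀ s : ℝ, IntervalIntegrable (fun t => g s t) volume y (y+ε) :=
    fun s => ((aux_slice_cont hg s).intervalIntegrable _ _ (μ := volume))
  have key : (∫ s in x..x+ε, ∫ t in y..y+ε, g s t) - (ε*ε) * g x y
      = ∫ s in x..x+ε, ∫ t in y..y+ε, (g s t - g x y) := by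
    have inner_eq : ∀ s : ℝ, (∫ t in y..y+ε, (g s t - g x y))
        = (∫ t in y..y+ε, g s t) - ε * g x y := by
      intro s
      rw [intervalIntegral.integral_sub (hginteg s)
        (intervalIntegrable_const (μ := volume))]
      simp [intervalIntegral.integral_const]
    rw [intervalIntegral.integral_congr (fun s _ => inner_eq s),
      intervalIntegral.integral_sub ((aux_inner_cont hg y (y+ε)).intervalIntegrable _ _ (μ := volume))
        (intervalIntegrable_const (μ := volume))]
    simp [intervalIntegral.integral_const]
    ring
  have houter : ∀ s ∈ Set.uIcc x (x+ε),
      ‖∫ t in y..y+ε, (g s t - g x y)‖ ≤ (δ/2) * ε := by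
    intro s hs
    have h1 := intervalIntegral.norm_integral_le_of_norm_le_const
      (C := δ/2) (f := fun t => g s t - g x y) (a := y) (b := y+ε) ?_
    · simpa [abs_of_pos hε0] using h1
    · intro t ht
      have h2 := hbound s hs t (Set.uIoc_subset_uIcc ht)
      simpa [Real.norm_eq_abs] using h2
  have hb : |(∫ s in x..x+ε, ∫ t in y..y+ε, (g s t - g x y))| ≤ (δ/2) * (ε*ε) := by
    have hout2 := intervalIntegral.norm_integral_le_of_norm_le_const
      (C := (δ/2) * ε) (f := fun s => ∫ t in y..y+ε, (g s t - g x y))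
      (a := x) (b := x+ε) (fun s hs => houter s (Set.uIoc_subset_uIcc hs))
    rw [show x + ε - x = ε by ring, abs_of_pos hε0] at hout2
    calc |(∫ s in x..x+ε, ∫ t in y..y+ε, (g s t - g x y))|
        ≤ (δ/2) * ε * ε := hout2
      _ = (δ/2) * (ε*ε) := by ring
  have hεε : (0:ℝ) < ε * ε := by positivity
  have heq : (∫ s in x..x+ε, ∫ t in y..y+ε, g s t) / (ε*ε) - g x y
      = ((∫ s in x..x+ε, ∫ t in y..y+ε, g s t) - (ε*ε) * g x y) / (ε*ε) := by
    field_simp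
  rw [Real.dist_eq, heq, key, abs_div, abs_of_pos hεε]
  calc |(∫ s in x..x+ε, ∫ t in y..y+ε, (g s t - g x y))| / (ε*ε)
      ≤ ((δ/2) * (ε*ε)) / (ε*ε) := by gcongr
    _ = δ/2 := by field_simp
    _ < δ := by linarith

lemma box_measure_pos {f : ℝ × ℝ → ℝ} (hf_cont : Continuous f) (hf_pos : ∀ p, 0 < f p)
    {a b c d : ℝ} (hab : a < b) (hcd : c < d) {S : Set (ℝ × ℝ)}
    (hsub : Icc a b ×ˢ Icc c d ⊆ S) :
    0 < (volume : Measure (ℝ × ℝ)).withDensity (fun p => ENNReal.ofReal (f p)) S := by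
  set B : Set (ℝ × ℝ) := Icc a b ×ˢ Icc c d with hB
  have hBmeas : MeasurableSet B := (measurableSet_Icc.prod measurableSet_Icc)
  have hBcomp : IsCompact B := isCompact_Icc.prod isCompact_Icc
  have hBne : B.Nonempty := (nonempty_Icc.mpr hab.le).prod (nonempty_Icc.mpr hcd.le)
  obtain ⟨p₀, hp₀B, hp₀min⟩ := hBcomp.exists_isMinOn hBne hf_cont.continuousOn
  set m := f p₀ with hm
  have hm0 : 0 < m := hf_pos p₀
  have hmono : (volume : Measure (ℝ × ℝ)).withDensity (fun p => ENNReal.ofReal (f p)) B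
      ≤ (volume : Measure (ℝ × ℝ)).withDensity (fun p => ENNReal.ofReal (f p)) S :=
    measure_mono hsub
  refine lt_of_lt_of_le ?_ hmono
  rw [withDensity_apply _ hBmeas]
  have hlow : ENNReal.ofReal m * volume B ≤ ∫⁻ p in B, ENNReal.ofReal (f p) ∂volume := by
    have : ∫⁻ p in B, ENNReal.ofReal m ∂volume ≤ ∫⁻ p in B, ENNReal.ofReal (f p) ∂volume := by
      refine setLIntegral_mono (hf_cont.measurable.ennreal_ofReal) fun p hp => ?_
      exact ENNReal.ofReal_le_ofReal (hp₀min hp)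
    simpa [lintegral_const, Measure.restrict_apply, MeasurableSet.univ] using this
  refine lt_of_lt_of_le ?_ hlow
  have hvol : volume B = ENNReal.ofReal (b - a) * ENNReal.ofReal (d - c) := by
    rw [hB, Measure.volume_eq_prod, Measure.prod_prod, Real.volume_Icc, Real.volume_Icc]
  rw [hvol]
  have h1 : (0:ℝ≥0∞) < ENNReal.ofReal m := ENNReal.ofReal_pos.mpr hm0
  have h2 : (0:ℝ≥0∞) < ENNReal.ofReal (b - a) := ENNReal.ofReal_pos.mpr (by linarith)
  have h3 : (0:ℝ≥0∞) < ENNReal.ofReal (d - c) := ENNReal.ofReal_pos.mpr (by linarith)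
  exact ENNReal.mul_pos h1.ne' (ENNReal.mul_pos h2.ne' h3.ne').ne'

lemma cdf_stuff {Ω : Type*} [MeasurableSpace Ω] (P : Measure Ω) [IsProbabilityMeasure P]
    (Z : Ω → ℝ) (hZ : Measurable Z)
    (hlevel : ∀ u v : ℝ, u < v → 0 < P {ω | Z ω ∈ Ioc u v}) :
    StrictMono (cdfOf P Z) ∧ (∀ a : ℝ, 0 < cdfOf P Z a ∧ cdfOf P Z a < 1) ∧
      ∀ a : ℝ, quantileOf P Z (cdfOf P Z a) = a := by
  have hsplit : ∀ u v : ℝ, u ≤ v →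
      P {ω | Z ω ≤ v} = P {ω | Z ω ≤ u} + P {ω | Z ω ∈ Ioc u v} := by
    intro u v huv
    rw [← measure_union]
    · congr 1
      ext ω
      simp only [mem_union, mem_setOf_eq, mem_Ioc]
      constructor
      · intro h
        rcases le_or_gt (Z ω) u with h' | h'
        · exact Or.inl h'
        · exact Or.inr ⟨h', h⟩
      · rintro (h | ⟨_, h⟩)
        · exact h.trans huv
        · exact h
    · exact Set.disjoint_left.mpr fun ω h1 h2 => absurd h1 (not_le.mpr h2.1)
    · exact hZ measurableSet_Ioc
  have hmono : StrictMono (cdfOf P Z) := by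
    intro u v huv
    unfold cdfOf
    rw [ENNReal.toReal_lt_toReal (measure_ne_top _ _) (measure_ne_top _ _), hsplit u v huv.le]
    exact ENNReal.lt_add_right (measure_ne_top _ _) (hlevel u v huv).ne'
  refine ⟨hmono, fun a => ⟨?_, ?_⟩, fun a => Function.leftInverse_invFun hmono.injective a⟩
  · unfold cdfOf
    rw [ENNReal.toReal_pos_iff]
    refine ⟨?_, measure_lt_top _ _⟩
    calc (0:ℝ≥0∞) < P {ω | Z ω ∈ Ioc (a-1) a} := hlevel _ _ (by linarith)
      _ ≤ P {ω | Z ω ≤ a} := measure_mono fun ω h => h.2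
  · have h1 : cdfOf P Z a < cdfOf P Z (a+1) := hmono (by linarith)
    have h2 : cdfOf P Z (a+1) ≤ 1 := by
      unfold cdfOf
      rw [show (1:ℝ) = (1:ℝ≥0∞).toReal by simp]
      exact ENNReal.toReal_mono ENNReal.one_ne_top prob_le_one
    linarith

lemma rect_identity
    {Ω : Type*} [MeasurableSpace Ω] (P : Measure Ω) [IsProbabilityMeasure P]
    (X Y : Ω → ℝ) (hX : Measurable X) (hY : Measurable Y)
    (f : ℝ × ℝ → ℝ) (hf_cont : Continuous f) (hf_pos : ∀ p, 0 < f p)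
    (hf_law : Measure.map (fun ω => (X ω, Y ω)) P =
      (volume : Measure (ℝ × ℝ)).withDensity (fun p => ENNReal.ofReal (f p)))
    (hcov : ∀ p₁ q₁ p₂ q₂ : ℝ, 0 < p₁ → p₁ < q₁ → q₁ < 1 → 0 < p₂ → p₂ < q₂ → q₂ < 1 →
      condCov P (quantileSet P X Y p₁ q₁ p₂ q₂) X Y = 0)
    {a b c d : ℝ} (hab : a < b) (hcd : c < d) :
    (∫ s in a..b, ∫ t in c..d, f (s,t) * (s*t)) * (∫ s in a..b, ∫ t in c..d, f (s,t) * 1)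
      = (∫ s in a..b, ∫ t in c..d, f (s,t) * s) * (∫ s in a..b, ∫ t in c..d, f (s,t) * t) := by
  set pair : Ω → ℝ × ℝ := fun ω => (X ω, Y ω) with hpairdef
  have hpair : Measurable pair := hX.prodMk hY
  -- level-set positivity for X
  have hlevelX : ∀ u v : ℝ, u < v → 0 < P {ω | X ω ∈ Ioc u v} := by
    intro u v huv
    have hset : {ω | X ω ∈ Ioc u v} = pair ⁻¹' {p : ℝ × ℝ | u < p.1 ∧ p.1 ≤ v} := rfl
    have hmeas : MeasurableSet {p : ℝ × ℝ | u < p.1 ∧ p.1 ≤ v} :=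
      (measurableSet_lt measurable_const measurable_fst).inter
        (measurableSet_le measurable_fst measurable_const)
    rw [hset, ← Measure.map_apply hpair hmeas, hf_law]
    refine box_measure_pos hf_cont hf_pos (a := (u+v)/2) (b := v) (c := 0) (d := 1)
      (by linarith) one_pos ?_
    rintro ⟨s, t⟩ ⟨hs, -⟩
    simp only [mem_Icc] at hs
    exact ⟨by linarith [hs.1], hs.2⟩
  have hlevelY : ∀ u v : ℝ, u < v → 0 < P {ω | Y ω ∈ Ioc u v} := by
    intro u v huv
    have hset : {ω | Y ω ∈ Ioc u v} = pair ⁻¹' {p : ℝ × ℝ | u < p.2 ∧ p.2 ≤ v} := rfl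
    have hmeas : MeasurableSet {p : ℝ × ℝ | u < p.2 ∧ p.2 ≤ v} :=
      (measurableSet_lt measurable_const measurable_snd).inter
        (measurableSet_le measurable_snd measurable_const)
    rw [hset, ← Measure.map_apply hpair hmeas, hf_law]
    refine box_measure_pos hf_cont hf_pos (a := 0) (b := 1) (c := (u+v)/2) (d := v)
      one_pos (by linarith) ?_
    rintro ⟨s, t⟩ ⟨-, ht⟩
    simp only [mem_Icc] at ht
    exact ⟨by linarith [ht.1], ht.2⟩
  obtain ⟨hmonoX, hrangeX, hqX⟩ := cdf_stuff P X hX hlevelX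
  obtain ⟨hmonoY, hrangeY, hqY⟩ := cdf_stuff P Y hY hlevelY
  -- the quantile set is the preimage of the rectangle
  set R : Set (ℝ × ℝ) := Icc a b ×ˢ Icc c d with hRdef
  have hRmeas : MeasurableSet R := measurableSet_Icc.prod measurableSet_Icc
  have hAeq : quantileSet P X Y (cdfOf P X a) (cdfOf P X b) (cdfOf P Y c) (cdfOf P Y d)
      = pair ⁻¹' R := by
    unfold quantileSet
    rw [hqX a, hqX b, hqY c, hqY d]
    ext ω
    simp only [mem_inter_iff, mem_setOf_eq, mem_preimage, hRdef, mem_prod, mem_Icc]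
    exact Iff.rfl
  have hcov0 : condCov P (pair ⁻¹' R) X Y = 0 := by
    rw [← hAeq]
    exact hcov _ _ _ _ (hrangeX a).1 (hmonoX hab) (hrangeX b).2
      (hrangeY c).1 (hmonoY hcd) (hrangeY d).2
  -- positivity and finiteness of P A
  have hPAeq : P (pair ⁻¹' R) = Measure.map pair P R := (Measure.map_apply hpair hRmeas).symm
  have hPApos : 0 < P (pair ⁻¹' R) := by
    rw [hPAeq, hf_law]
    exact box_measure_pos hf_cont hf_pos hab hcd subset_rfl
  have hPAfin : P (pair ⁻¹' R) ≠ ∞ := measure_ne_top _ _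
  set cR : ℝ := (P (pair ⁻¹' R)).toReal with hcRdef
  have hcRpos : 0 < cR := ENNReal.toReal_pos hPApos.ne' hPAfin
  -- the master integral computation
  have hint : ∀ g : ℝ × ℝ → ℝ, Continuous g →
      ∫ ω, g (pair ω) ∂(P[|pair ⁻¹' R]) =
        cR⁻¹ * ∫ s in a..b, ∫ t in c..d, f (s, t) * g (s, t) := by
    intro g hg
    have h1 : ∫ ω, g (pair ω) ∂(P[|pair ⁻¹' R])
        = ((P (pair ⁻¹' R))⁻¹).toReal • ∫ ω in pair ⁻¹' R, g (pair ω) ∂P := by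
      rw [ProbabilityTheory.cond, integral_smul_measure]
    have h2 : ∫ ω in pair ⁻¹' R, g (pair ω) ∂P = ∫ p in R, g p ∂(Measure.map pair P) :=
      (setIntegral_map hRmeas hg.aestronglyMeasurable hpair.aemeasurable).symm
    have h3 : ∫ p in R, g p ∂(Measure.map pair P) = ∫ p in R, f p * g p ∂(volume) := by
      rw [hf_law]
      have : (volume : Measure (ℝ × ℝ)).withDensity (fun p => ENNReal.ofReal (f p))
          = (volume : Measure (ℝ × ℝ)).withDensity (fun p => ((f p).toNNReal : ℝ≥0∞)) := rfl
      rw [this, setIntegral_withDensity_eq_setIntegral_smul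
        (hf_cont.measurable.real_toNNReal) g hRmeas]
      refine setIntegral_congr_fun hRmeas fun p _ => ?_
      simp [NNReal.smul_def, Real.coe_toNNReal _ (hf_pos p).le]
    have h4 : ∫ p in R, f p * g p ∂(volume)
        = ∫ s in a..b, ∫ t in c..d, f (s, t) * g (s, t) := by
      rw [hRdef, Measure.volume_eq_prod, setIntegral_prod]
      · rw [intervalIntegral.integral_of_le hab.le, ← integral_Icc_eq_integral_Ioc]
        refine setIntegral_congr_fun measurableSet_Icc fun s _ => ?_
        rw [intervalIntegral.integral_of_le hcd.le, ← integral_Icc_eq_integral_Ioc]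
      · rw [← Measure.volume_eq_prod]
        exact (hf_cont.mul hg).continuousOn.integrableOn_compact
          (isCompact_Icc.prod isCompact_Icc)
    rw [h1, h2, h3, h4, ENNReal.toReal_inv, smul_eq_mul]
  have hcRne : cR ≠ 0 := hcRpos.ne'
  -- identify cR with the mass integral
  have hprob : IsProbabilityMeasure (P[|pair ⁻¹' R]) :=
    cond_isProbabilityMeasure hPApos.ne'
  set M1 : ℝ := ∫ s in a..b, ∫ t in c..d, f (s, t) * 1 with hM1
  set Mx : ℝ := ∫ s in a..b, ∫ t in c..d, f (s, t) * s with hMx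
  set My : ℝ := ∫ s in a..b, ∫ t in c..d, f (s, t) * t with hMy
  set Mxy : ℝ := ∫ s in a..b, ∫ t in c..d, f (s, t) * (s * t) with hMxy
  have hmass : cR = M1 := by
    have h := hint (fun _ => 1) continuous_const
    rw [integral_const, probReal_univ, one_smul, ← hM1] at h
    have h2 : cR * 1 = cR * (cR⁻¹ * M1) := by rw [← h]
    rwa [mul_one, ← mul_assoc, mul_inv_cancel₀ hcRne, one_mul] at h2
  -- unpack condCov
  have hXY : ∫ ω, X ω * Y ω ∂(P[|pair ⁻¹' R]) = cR⁻¹ * Mxy :=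
    hint (fun p => p.1 * p.2) (continuous_fst.mul continuous_snd)
  have hXonly : ∫ ω, X ω ∂(P[|pair ⁻¹' R]) = cR⁻¹ * Mx :=
    hint (fun p => p.1) continuous_fst
  have hYonly : ∫ ω, Y ω ∂(P[|pair ⁻¹' R]) = cR⁻¹ * My :=
    hint (fun p => p.2) continuous_snd
  rw [condCov, hXY, hXonly, hYonly] at hcov0
  rw [← hmass]
  have hexp : cR⁻¹ * (Mxy * cR - Mx * My) * cR⁻¹ = 0 := by
    rw [show cR⁻¹ * (Mxy * cR - Mx * My) * cR⁻¹
      = cR⁻¹ * Mxy * (cR * cR⁻¹) - cR⁻¹ * Mx * (cR⁻¹ * My) by ring,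
      mul_inv_cancel₀ hcRne, mul_one]
    linarith [hcov0]
  rcases mul_eq_zero.mp hexp with h | h
  · rcases mul_eq_zero.mp h with h' | h'
    · exact absurd h' (inv_ne_zero hcRne)
    · linarith [h']
  · exact absurd h (inv_ne_zero hcRne)

/-- If `(X,Y)` has a jointly continuous, strictly positive density `f` and the conditional
covariance vanishes on every quantile set, then the density satisfies the cross-product
identity `f(x₁,y₁)·f(x₂,y₂) = f(x₁,y₂)·f(x₂,y₁)`. -/
theorem density_cross_identity_of_condCov_eq_zero
    {Ω : Type*} [MeasurableSpace Ω] (P : Measure Ω) [IsProbabilityMeasure P]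
    (X Y : Ω → ℝ) (hX : Measurable X) (hY : Measurable Y)
    (f : ℝ × ℝ → ℝ) (hf_cont : Continuous f) (hf_pos : ∀ p, 0 < f p)
    (hf_law : Measure.map (fun ω => (X ω, Y ω)) P =
      (volume : Measure (ℝ × ℝ)).withDensity (fun p => ENNReal.ofReal (f p)))
    (hcov : ∀ p₁ q₁ p₂ q₂ : ℝ, 0 < p₁ → p₁ < q₁ → q₁ < 1 → 0 < p₂ → p₂ < q₂ → q₂ < 1 →
      condCov P (quantileSet P X Y p₁ q₁ p₂ q₂) X Y = 0) :
    ∀ x₁ x₂ y₁ y₂ : ℝ, f (x₁, y₁) * f (x₂, y₂) = f (x₁, y₂) * f (x₂, y₁) := by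
  intro x₁ x₂ y₁ y₂
  rcases eq_or_ne x₁ x₂ with hx | hx
  · rw [hx]; ring
  rcases eq_or_ne y₁ y₂ with hy | hy
  · rw [hy]
  set W : (ℝ → ℝ → ℝ) → ℝ → ℝ → ℝ → ℝ → ℝ :=
    fun φ a b c d => ∫ s in a..b, ∫ t in c..d, f (s, t) * φ s t with hW
  set g1 : ℝ → ℝ → ℝ := fun _ _ => 1 with hg1
  set gx : ℝ → ℝ → ℝ := fun s _ => s with hgx
  set gy : ℝ → ℝ → ℝ := fun _ t => t with hgy
  set gxy : ℝ → ℝ → ℝ := fun s t => s * t with hgxy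
  have hc1 : Continuous fun p : ℝ × ℝ => g1 p.1 p.2 := by rw [hg1]; exact continuous_const
  have hcx : Continuous fun p : ℝ × ℝ => gx p.1 p.2 := by rw [hgx]; exact continuous_fst
  have hcy : Continuous fun p : ℝ × ℝ => gy p.1 p.2 := by rw [hgy]; exact continuous_snd
  have hcxy : Continuous fun p : ℝ × ℝ => gxy p.1 p.2 := by
    rw [hgxy]; exact continuous_fst.mul continuous_snd
  have hfφ : ∀ (φ : ℝ → ℝ → ℝ), Continuous (fun p : ℝ × ℝ => φ p.1 p.2) →
      Continuous (fun p : ℝ × ℝ => f p * φ p.1 p.2) := fun φ hφ => hf_cont.mul hφ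
  have hsub1 : ∀ (φ : ℝ → ℝ → ℝ), Continuous (fun p : ℝ × ℝ => φ p.1 p.2) →
      ∀ a b c d : ℝ, W φ a b c d = W φ 0 b c d - W φ 0 a c d := by
    intro φ hφ a b c d
    simp only [hW]
    exact aux_W_sub1 (g := fun s t => f (s,t) * φ s t) (hfφ φ hφ) a b c d
  have hsub2 : ∀ (φ : ℝ → ℝ → ℝ), Continuous (fun p : ℝ × ℝ => φ p.1 p.2) →
      ∀ a b c d : ℝ, W φ a b c d = W φ a b 0 d - W φ a b 0 c := by
    intro φ hφ a b c d
    simp only [hW]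
    exact aux_W_sub2 (g := fun s t => f (s,t) * φ s t) (hfφ φ hφ) a b c d
  have hflipA : ∀ (φ : ℝ → ℝ → ℝ) (a b c d : ℝ), W φ a b c d = -W φ b a c d := by
    intro φ a b c d; simp only [hW]; exact aux_W_flip1 _ a b c d
  have hflipC : ∀ (φ : ℝ → ℝ → ℝ) (a b c d : ℝ), W φ a b c d = -W φ a b d c := by
    intro φ a b c d; simp only [hW]; exact aux_W_flip2 _ a b c d
  have hzA : ∀ (φ : ℝ → ℝ → ℝ) (a c d : ℝ), W φ a a c d = 0 := by
    intro φ a c d; simp only [hW]; exact intervalIntegral.integral_same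
  have hzC : ∀ (φ : ℝ → ℝ → ℝ) (a b c : ℝ), W φ a b c c = 0 := by
    intro φ a b c
    simp only [hW, intervalIntegral.integral_same, intervalIntegral.integral_zero]
  have hbase : ∀ a b c d : ℝ, a < b → c < d →
      W gxy a b c d * W g1 a b c d = W gx a b c d * W gy a b c d := by
    intro a b c d hab hcd
    simp only [hW, hg1, hgx, hgy, hgxy]
    exact rect_identity P X Y hX hY f hf_cont hf_pos hf_law hcov hab hcd
  have hN : ∀ (φ : ℝ → ℝ → ℝ), Continuous (fun p : ℝ × ℝ => φ p.1 p.2) → ∀ x y : ℝ,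
      Filter.Tendsto (fun ε : ℝ => W φ x (x+ε) y (y+ε) / (ε*ε)) (𝓝[>] 0)
        (𝓝 (f (x, y) * φ x y)) := by
    intro φ hφ x y
    simp only [hW]
    exact aux_tendsto_box (g := fun s t => f (s,t) * φ s t) (hfφ φ hφ) x y
  have hyp0 : ∀ a b c d : ℝ,
      W gxy a b c d * W g1 a b c d = W gx a b c d * W gy a b c d := by
    intro a b c d
    rcases lt_trichotomy a b with h1 | h1 | h1
    · rcases lt_trichotomy c d with h2 | h2 | h2
      · exact hbase a b c d h1 h2
      · rw [h2, hzC gxy, hzC g1, hzC gx, hzC gy]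
      · rw [hflipC gxy a b c d, hflipC g1 a b c d, hflipC gx a b c d, hflipC gy a b c d]
        linear_combination hbase a b d c h1 h2
    · rw [h1, hzA gxy, hzA g1, hzA gx, hzA gy]
    · rcases lt_trichotomy c d with h2 | h2 | h2
      · rw [hflipA gxy a b c d, hflipA g1 a b c d, hflipA gx a b c d, hflipA gy a b c d]
        linear_combination hbase b a c d h1 h2
      · rw [h2, hzC gxy, hzC g1, hzC gx, hzC gy]
      · rw [hflipA gxy a b c d, hflipA g1 a b c d, hflipA gx a b c d, hflipA gy a b c d,
          hflipC gxy b a c d, hflipC g1 b a c d, hflipC gx b a c d, hflipC gy b a c d]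
        linear_combination hbase b a d c h1 h2
  have hstepX : ∀ a b a' b' c d : ℝ,
      W gxy a b c d * W g1 a' b' c d + W g1 a b c d * W gxy a' b' c d
        - W gx a b c d * W gy a' b' c d - W gy a b c d * W gx a' b' c d = 0 := by
    intro a b a' b' c d
    have h8 := aux_polar8 (fun s => W gxy 0 s c d) (fun s => W g1 0 s c d)
      (fun _ => 0) (fun _ => 0) (fun s => W gx 0 s c d) (fun s => W gy 0 s c d)
      (fun _ => 0) (fun _ => 0) ?_ a b a' b'
    · beta_reduce at h8
      rw [hsub1 gxy hcxy a b c d, hsub1 g1 hc1 a b c d, hsub1 gx hcx a b c d,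
        hsub1 gy hcy a b c d, hsub1 gxy hcxy a' b' c d, hsub1 g1 hc1 a' b' c d,
        hsub1 gx hcx a' b' c d, hsub1 gy hcy a' b' c d]
      linear_combination h8
    · intro u v
      beta_reduce
      have h0 := hyp0 u v c d
      rw [hsub1 gxy hcxy u v c d, hsub1 g1 hc1 u v c d, hsub1 gx hcx u v c d,
        hsub1 gy hcy u v c d] at h0
      linear_combination h0
  have hstepY : ∀ a b a' b' c d c' d' : ℝ,
      W gxy a b c d * W g1 a' b' c' d' + W g1 a' b' c d * W gxy a b c' d'
        + W g1 a b c d * W gxy a' b' c' d' + W gxy a' b' c d * W g1 a b c' d'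
        - W gx a b c d * W gy a' b' c' d' - W gy a' b' c d * W gx a b c' d'
        - W gy a b c d * W gx a' b' c' d' - W gx a' b' c d * W gy a b c' d' = 0 := by
    intro a b a' b' c d c' d'
    have h8 := aux_polar8 (fun t => W gxy a b 0 t) (fun t => W g1 a' b' 0 t)
      (fun t => W g1 a b 0 t) (fun t => W gxy a' b' 0 t) (fun t => W gx a b 0 t)
      (fun t => W gy a' b' 0 t) (fun t => W gy a b 0 t) (fun t => W gx a' b' 0 t)
      ?_ c d c' d'
    · beta_reduce at h8
      rw [hsub2 gxy hcxy a b c d, hsub2 g1 hc1 a' b' c' d', hsub2 g1 hc1 a' b' c d,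
        hsub2 gxy hcxy a b c' d', hsub2 g1 hc1 a b c d, hsub2 gxy hcxy a' b' c' d',
        hsub2 gxy hcxy a' b' c d, hsub2 g1 hc1 a b c' d', hsub2 gx hcx a b c d,
        hsub2 gy hcy a' b' c' d', hsub2 gy hcy a' b' c d, hsub2 gx hcx a b c' d',
        hsub2 gy hcy a b c d, hsub2 gx hcx a' b' c' d', hsub2 gx hcx a' b' c d,
        hsub2 gy hcy a b c' d']
      linear_combination h8
    · intro u v
      beta_reduce
      have h0 := hstepX a b a' b' u v
      rw [hsub2 gxy hcxy a b u v, hsub2 g1 hc1 a' b' u v, hsub2 g1 hc1 a b u v,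
        hsub2 gxy hcxy a' b' u v, hsub2 gx hcx a b u v, hsub2 gy hcy a' b' u v,
        hsub2 gy hcy a b u v, hsub2 gx hcx a' b' u v] at h0
      linear_combination h0
  -- pass to the limit of shrinking boxes
  have l1 := (hN gxy hcxy x₁ y₁).mul (hN g1 hc1 x₂ y₂)
  have l2 := (hN g1 hc1 x₂ y₁).mul (hN gxy hcxy x₁ y₂)
  have l3 := (hN g1 hc1 x₁ y₁).mul (hN gxy hcxy x₂ y₂)
  have l4 := (hN gxy hcxy x₂ y₁).mul (hN g1 hc1 x₁ y₂)
  have l5 := (hN gx hcx x₁ y₁).mul (hN gy hcy x₂ y₂)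
  have l6 := (hN gy hcy x₂ y₁).mul (hN gx hcx x₁ y₂)
  have l7 := (hN gy hcy x₁ y₁).mul (hN gx hcx x₂ y₂)
  have l8 := (hN gx hcx x₂ y₁).mul (hN gy hcy x₁ y₂)
  have hlim : Filter.Tendsto (fun ε : ℝ =>
      W gxy x₁ (x₁+ε) y₁ (y₁+ε) / (ε*ε) * (W g1 x₂ (x₂+ε) y₂ (y₂+ε) / (ε*ε))
      + W g1 x₂ (x₂+ε) y₁ (y₁+ε) / (ε*ε) * (W gxy x₁ (x₁+ε) y₂ (y₂+ε) / (ε*ε))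
      + W g1 x₁ (x₁+ε) y₁ (y₁+ε) / (ε*ε) * (W gxy x₂ (x₂+ε) y₂ (y₂+ε) / (ε*ε))
      + W gxy x₂ (x₂+ε) y₁ (y₁+ε) / (ε*ε) * (W g1 x₁ (x₁+ε) y₂ (y₂+ε) / (ε*ε))
      - W gx x₁ (x₁+ε) y₁ (y₁+ε) / (ε*ε) * (W gy x₂ (x₂+ε) y₂ (y₂+ε) / (ε*ε))
      - W gy x₂ (x₂+ε) y₁ (y₁+ε) / (ε*ε) * (W gx x₁ (x₁+ε) y₂ (y₂+ε) / (ε*ε))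
      - W gy x₁ (x₁+ε) y₁ (y₁+ε) / (ε*ε) * (W gx x₂ (x₂+ε) y₂ (y₂+ε) / (ε*ε))
      - W gx x₂ (x₂+ε) y₁ (y₁+ε) / (ε*ε) * (W gy x₁ (x₁+ε) y₂ (y₂+ε) / (ε*ε)))
      (𝓝[>] 0) (𝓝 (
      f (x₁, y₁) * gxy x₁ y₁ * (f (x₂, y₂) * g1 x₂ y₂)
      + f (x₂, y₁) * g1 x₂ y₁ * (f (x₁, y₂) * gxy x₁ y₂)
      + f (x₁, y₁) * g1 x₁ y₁ * (f (x₂, y₂) * gxy x₂ y₂)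
      + f (x₂, y₁) * gxy x₂ y₁ * (f (x₁, y₂) * g1 x₁ y₂)
      - f (x₁, y₁) * gx x₁ y₁ * (f (x₂, y₂) * gy x₂ y₂)
      - f (x₂, y₁) * gy x₂ y₁ * (f (x₁, y₂) * gx x₁ y₂)
      - f (x₁, y₁) * gy x₁ y₁ * (f (x₂, y₂) * gx x₂ y₂)
      - f (x₂, y₁) * gx x₂ y₁ * (f (x₁, y₂) * gy x₁ y₂))) :=
    (((((((l1.add l2).add l3).add l4).sub l5).sub l6).sub l7).sub l8)
  have hzero : ∀ ε : ℝ,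
      W gxy x₁ (x₁+ε) y₁ (y₁+ε) / (ε*ε) * (W g1 x₂ (x₂+ε) y₂ (y₂+ε) / (ε*ε))
      + W g1 x₂ (x₂+ε) y₁ (y₁+ε) / (ε*ε) * (W gxy x₁ (x₁+ε) y₂ (y₂+ε) / (ε*ε))
      + W g1 x₁ (x₁+ε) y₁ (y₁+ε) / (ε*ε) * (W gxy x₂ (x₂+ε) y₂ (y₂+ε) / (ε*ε))
      + W gxy x₂ (x₂+ε) y₁ (y₁+ε) / (ε*ε) * (W g1 x₁ (x₁+ε) y₂ (y₂+ε) / (ε*ε))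
      - W gx x₁ (x₁+ε) y₁ (y₁+ε) / (ε*ε) * (W gy x₂ (x₂+ε) y₂ (y₂+ε) / (ε*ε))
      - W gy x₂ (x₂+ε) y₁ (y₁+ε) / (ε*ε) * (W gx x₁ (x₁+ε) y₂ (y₂+ε) / (ε*ε))
      - W gy x₁ (x₁+ε) y₁ (y₁+ε) / (ε*ε) * (W gx x₂ (x₂+ε) y₂ (y₂+ε) / (ε*ε))
      - W gx x₂ (x₂+ε) y₁ (y₁+ε) / (ε*ε) * (W gy x₁ (x₁+ε) y₂ (y₂+ε) / (ε*ε)) = 0 := by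
    intro ε
    have h := hstepY x₁ (x₁+ε) x₂ (x₂+ε) y₁ (y₁+ε) y₂ (y₂+ε)
    linear_combination ((ε*ε)⁻¹ * (ε*ε)⁻¹) * h
  have hlim0 : Filter.Tendsto (fun ε : ℝ =>
      W gxy x₁ (x₁+ε) y₁ (y₁+ε) / (ε*ε) * (W g1 x₂ (x₂+ε) y₂ (y₂+ε) / (ε*ε))
      + W g1 x₂ (x₂+ε) y₁ (y₁+ε) / (ε*ε) * (W gxy x₁ (x₁+ε) y₂ (y₂+ε) / (ε*ε))
      + W g1 x₁ (x₁+ε) y₁ (y₁+ε) / (ε*ε) * (W gxy x₂ (x₂+ε) y₂ (y₂+ε) / (ε*ε))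
      + W gxy x₂ (x₂+ε) y₁ (y₁+ε) / (ε*ε) * (W g1 x₁ (x₁+ε) y₂ (y₂+ε) / (ε*ε))
      - W gx x₁ (x₁+ε) y₁ (y₁+ε) / (ε*ε) * (W gy x₂ (x₂+ε) y₂ (y₂+ε) / (ε*ε))
      - W gy x₂ (x₂+ε) y₁ (y₁+ε) / (ε*ε) * (W gx x₁ (x₁+ε) y₂ (y₂+ε) / (ε*ε))
      - W gy x₁ (x₁+ε) y₁ (y₁+ε) / (ε*ε) * (W gx x₂ (x₂+ε) y₂ (y₂+ε) / (ε*ε))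
      - W gx x₂ (x₂+ε) y₁ (y₁+ε) / (ε*ε) * (W gy x₁ (x₁+ε) y₂ (y₂+ε) / (ε*ε)))
      (𝓝[>] 0) (𝓝 0) := by
    exact Filter.Tendsto.congr (fun ε => (hzero ε).symm) tendsto_const_nhds
  have hL := tendsto_nhds_unique hlim hlim0
  simp only [hg1, hgx, hgy, hgxy] at hL
  have hfac : (x₁ - x₂) * ((y₁ - y₂) *
      (f (x₁, y₁) * f (x₂, y₂) - f (x₁, y₂) * f (x₂, y₁))) = 0 := by
    linear_combination hL
  rcases mul_eq_zero.mp hfac with h | h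
  · exact absurd (sub_eq_zero.mp h) hx
  rcases mul_eq_zero.mp h with h' | h'
  · exact absurd (sub_eq_zero.mp h') hy
  · linarith
end

section
/- Let H : (0,1)⁴ → ℝ be a continuous function that is symmetric under the swap (u₁,v₁,u₂,v₂) ↦ (u₂,v₁,u₁,v₂) and under the swap (u₁,v₁,u₂,v₂) ↦ (u₁,v₂,u₂,v₁). Suppose that for all 0 < p₁ < q₁ < 1 and 0 < p₂ < q₂ < 1 one has ∫_{p₁}^{q₁} ∫_{p₂}^{q₂} ∫_{p₁}^{q₁} ∫_{p₂}^{q₂} H(u₁,v₁,u₂,v₂) dv₂ du₂ dv₁ du₁ = 0. Then H is identically zero on (0,1)⁴. -/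
open MeasureTheory Set

namespace BoxAux

lemma contInt {X : Type*} [TopologicalSpace X] {F : X → ℝ → ℝ}
    (hF : Continuous fun p : X × ℝ => F p.1 p.2) (a b : ℝ) :
    Continuous fun x => ∫ t in a..b, F x t :=
  intervalIntegral.continuous_parametric_intervalIntegral_of_continuous' (μ := volume) hF a b

/-- Fubini swap for interval integrals of a continuous function, any orientation. -/
lemma swap2 {F : ℝ → ℝ → ℝ} (hF : Continuous fun p : ℝ × ℝ => F p.1 p.2) (a b c d : ℝ) :
    (∫ x in a..b, ∫ y in c..d, F x y) = ∫ y in c..d, ∫ x in a..b, F x y := by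
  have core : ∀ a b c d : ℝ, a ≤ b → c ≤ d →
      (∫ x in a..b, ∫ y in c..d, F x y) = ∫ y in c..d, ∫ x in a..b, F x y := by
    intro a b c d hab hcd
    have hi : Integrable (Function.uncurry F)
        ((volume.restrict (Ioc a b)).prod (volume.restrict (Ioc c d))) := by
      rw [Measure.prod_restrict, ← Measure.volume_eq_prod]
      exact (hF.continuousOn.integrableOn_compact (isCompact_Icc.prod isCompact_Icc)).mono_set
        (prod_mono Ioc_subset_Icc_self Ioc_subset_Icc_self)
    simp only [intervalIntegral.integral_of_le hab, intervalIntegral.integral_of_le hcd]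
    exact MeasureTheory.integral_integral_swap hi
  rcases le_total a b with hab | hab <;> rcases le_total c d with hcd | hcd
  · exact core a b c d hab hcd
  · have L := core a b d c hab hcd
    have l1 : (∫ x in a..b, ∫ y in c..d, F x y) = -∫ x in a..b, ∫ y in d..c, F x y := by
      simp only [intervalIntegral.integral_symm d c]
      exact intervalIntegral.integral_neg
    have r1 : (∫ y in c..d, ∫ x in a..b, F x y) = -∫ y in d..c, ∫ x in a..b, F x y :=
      intervalIntegral.integral_symm d c
    linarith
  · have L := core b a c d hab hcd
    have l1 : (∫ x in a..b, ∫ y in c..d, F x y) = -∫ x in b..a, ∫ y in c..d, F x y :=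
      intervalIntegral.integral_symm b a
    have r1 : (∫ y in c..d, ∫ x in a..b, F x y) = -∫ y in c..d, ∫ x in b..a, F x y := by
      simp only [intervalIntegral.integral_symm b a]
      exact intervalIntegral.integral_neg
    linarith
  · have L := core b a d c hab hcd
    have l1 : (∫ x in a..b, ∫ y in c..d, F x y) = -∫ x in b..a, ∫ y in c..d, F x y :=
      intervalIntegral.integral_symm b a
    have l2 : (∫ x in b..a, ∫ y in c..d, F x y) = -∫ x in b..a, ∫ y in d..c, F x y := by
      simp only [intervalIntegral.integral_symm d c]
      exact intervalIntegral.integral_neg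
    have r1 : (∫ y in c..d, ∫ x in a..b, F x y) = -∫ y in d..c, ∫ x in a..b, F x y :=
      intervalIntegral.integral_symm d c
    have r2 : (∫ y in d..c, ∫ x in a..b, F x y) = -∫ y in d..c, ∫ x in b..a, F x y := by
      simp only [intervalIntegral.integral_symm b a]
      exact intervalIntegral.integral_neg
    linarith


/-- The iterated integral over a box. -/
noncomputable def J (G : ℝ → ℝ → ℝ → ℝ → ℝ) (a b c d e f g h : ℝ) : ℝ :=
  ∫ x in a..b, ∫ y in c..d, ∫ z in e..f, ∫ w in g..h, G x y z w

variable {G : ℝ → ℝ → ℝ → ℝ → ℝ}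
  (hG : Continuous fun z : ℝ × ℝ × ℝ × ℝ => G z.1 z.2.1 z.2.2.1 z.2.2.2)

include hG

lemma contA (g h : ℝ) :
    Continuous fun p : ℝ × ℝ × ℝ => ∫ w in g..h, G p.1 p.2.1 p.2.2 w := by
  apply contInt (F := fun (p : ℝ × ℝ × ℝ) w => G p.1 p.2.1 p.2.2 w)
  exact hG.comp (show Continuous fun q : (ℝ × ℝ × ℝ) × ℝ =>
    ((q.1.1, q.1.2.1, q.1.2.2, q.2) : ℝ × ℝ × ℝ × ℝ) by fun_prop)

lemma contB (e f g h : ℝ) :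
    Continuous fun p : ℝ × ℝ => ∫ z in e..f, ∫ w in g..h, G p.1 p.2 z w := by
  apply contInt (F := fun (p : ℝ × ℝ) z => ∫ w in g..h, G p.1 p.2 z w)
  exact (contA hG g h).comp (show Continuous fun q : (ℝ × ℝ) × ℝ =>
    ((q.1.1, q.1.2, q.2) : ℝ × ℝ × ℝ) by fun_prop)

lemma contC (c d e f g h : ℝ) :
    Continuous fun x : ℝ => ∫ y in c..d, ∫ z in e..f, ∫ w in g..h, G x y z w := by
  apply contInt (F := fun (x : ℝ) y => ∫ z in e..f, ∫ w in g..h, G x y z w)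
  exact (contB hG e f g h).comp (show Continuous fun q : ℝ × ℝ =>
    ((q.1, q.2) : ℝ × ℝ) by fun_prop)

omit hG

lemma J_flip1 (a b c d e f g h : ℝ) : J G a b c d e f g h = -J G b a c d e f g h := by
  simp only [J]
  exact intervalIntegral.integral_symm b a

lemma J_flip2 (a b c d e f g h : ℝ) : J G a b c d e f g h = -J G a b d c e f g h := by
  simp only [J, intervalIntegral.integral_symm d c, intervalIntegral.integral_neg]

lemma J_flip3 (a b c d e f g h : ℝ) : J G a b c d e f g h = -J G a b c d f e g h := by
  simp only [J, intervalIntegral.integral_symm f e, intervalIntegral.integral_neg]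

lemma J_flip4 (a b c d e f g h : ℝ) : J G a b c d e f g h = -J G a b c d e f h g := by
  simp only [J, intervalIntegral.integral_symm h g, intervalIntegral.integral_neg]

lemma J_neg (a b c d e f g h : ℝ) :
    J (fun x y z w => -G x y z w) a b c d e f g h = -J G a b c d e f g h := by
  simp only [J, intervalIntegral.integral_neg]

include hG

lemma J_add1 (a m b c d e f g h : ℝ) :
    J G a b c d e f g h = J G a m c d e f g h + J G m b c d e f g h := by
  simp only [J]
  exact (intervalIntegral.integral_add_adjacent_intervals
    ((contC hG c d e f g h).intervalIntegrable _ _)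
    ((contC hG c d e f g h).intervalIntegrable _ _)).symm

lemma J_add2 (a b c m d e f g h : ℝ) :
    J G a b c d e f g h = J G a b c m e f g h + J G a b m d e f g h := by
  simp only [J]
  have inner : ∀ x : ℝ, (∫ y in c..d, ∫ z in e..f, ∫ w in g..h, G x y z w)
      = (∫ y in c..m, ∫ z in e..f, ∫ w in g..h, G x y z w)
        + ∫ y in m..d, ∫ z in e..f, ∫ w in g..h, G x y z w := by
    intro x
    have hc : Continuous fun y : ℝ => ∫ z in e..f, ∫ w in g..h, G x y z w :=
      (contB hG e f g h).comp (show Continuous fun y : ℝ => ((x, y) : ℝ × ℝ) by fun_prop)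
    exact (intervalIntegral.integral_add_adjacent_intervals
      (hc.intervalIntegrable _ _) (hc.intervalIntegrable _ _)).symm
  simp only [inner]
  exact intervalIntegral.integral_add
    ((contC hG c m e f g h).intervalIntegrable _ _)
    ((contC hG m d e f g h).intervalIntegrable _ _)

lemma J_add3 (a b c d e m f g h : ℝ) :
    J G a b c d e f g h = J G a b c d e m g h + J G a b c d m f g h := by
  simp only [J]
  have inner : ∀ x y : ℝ, (∫ z in e..f, ∫ w in g..h, G x y z w)
      = (∫ z in e..m, ∫ w in g..h, G x y z w) + ∫ z in m..f, ∫ w in g..h, G x y z w := by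
    intro x y
    have hc : Continuous fun z : ℝ => ∫ w in g..h, G x y z w :=
      (contA hG g h).comp (show Continuous fun z : ℝ => ((x, y, z) : ℝ × ℝ × ℝ) by fun_prop)
    exact (intervalIntegral.integral_add_adjacent_intervals
      (hc.intervalIntegrable _ _) (hc.intervalIntegrable _ _)).symm
  simp only [inner]
  have inner2 : ∀ x : ℝ, (∫ y in c..d, ((∫ z in e..m, ∫ w in g..h, G x y z w)
        + ∫ z in m..f, ∫ w in g..h, G x y z w))
      = (∫ y in c..d, ∫ z in e..m, ∫ w in g..h, G x y z w)
        + ∫ y in c..d, ∫ z in m..f, ∫ w in g..h, G x y z w := by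
    intro x
    exact intervalIntegral.integral_add
      (((contB hG e m g h).comp (show Continuous fun y : ℝ => ((x, y) : ℝ × ℝ)
        by fun_prop)).intervalIntegrable _ _)
      (((contB hG m f g h).comp (show Continuous fun y : ℝ => ((x, y) : ℝ × ℝ)
        by fun_prop)).intervalIntegrable _ _)
  simp only [inner2]
  exact intervalIntegral.integral_add
    ((contC hG c d e m g h).intervalIntegrable _ _)
    ((contC hG c d m f g h).intervalIntegrable _ _)

lemma J_add4 (a b c d e f g m h : ℝ) :
    J G a b c d e f g h = J G a b c d e f g m + J G a b c d e f m h := by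
  simp only [J]
  have inner : ∀ x y z : ℝ, (∫ w in g..h, G x y z w)
      = (∫ w in g..m, G x y z w) + ∫ w in m..h, G x y z w := by
    intro x y z
    have hc : Continuous fun w : ℝ => G x y z w :=
      hG.comp (show Continuous fun w : ℝ => ((x, y, z, w) : ℝ × ℝ × ℝ × ℝ) by fun_prop)
    exact (intervalIntegral.integral_add_adjacent_intervals
      (hc.intervalIntegrable _ _) (hc.intervalIntegrable _ _)).symm
  simp only [inner]
  have inner2 : ∀ x y : ℝ, (∫ z in e..f, ((∫ w in g..m, G x y z w) + ∫ w in m..h, G x y z w))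
      = (∫ z in e..f, ∫ w in g..m, G x y z w) + ∫ z in e..f, ∫ w in m..h, G x y z w := by
    intro x y
    exact intervalIntegral.integral_add
      (((contA hG g m).comp (show Continuous fun z : ℝ => ((x, y, z) : ℝ × ℝ × ℝ)
        by fun_prop)).intervalIntegrable _ _)
      (((contA hG m h).comp (show Continuous fun z : ℝ => ((x, y, z) : ℝ × ℝ × ℝ)
        by fun_prop)).intervalIntegrable _ _)
  simp only [inner2]
  have inner3 : ∀ x : ℝ, (∫ y in c..d, ((∫ z in e..f, ∫ w in g..m, G x y z w)
        + ∫ z in e..f, ∫ w in m..h, G x y z w))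
      = (∫ y in c..d, ∫ z in e..f, ∫ w in g..m, G x y z w)
        + ∫ y in c..d, ∫ z in e..f, ∫ w in m..h, G x y z w := by
    intro x
    exact intervalIntegral.integral_add
      (((contB hG e f g m).comp (show Continuous fun y : ℝ => ((x, y) : ℝ × ℝ)
        by fun_prop)).intervalIntegrable _ _)
      (((contB hG e f m h).comp (show Continuous fun y : ℝ => ((x, y) : ℝ × ℝ)
        by fun_prop)).intervalIntegrable _ _)
  simp only [inner3]
  exact intervalIntegral.integral_add
    ((contC hG c d e f g m).intervalIntegrable _ _)
    ((contC hG c d e f m h).intervalIntegrable _ _)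

lemma swap13 (hsym : ∀ x y z w : ℝ, G z y x w = G x y z w) (a b c d e f g h : ℝ) :
    J G a b c d e f g h = J G e f c d a b g h := by
  simp only [J]
  have s1 : ∀ x : ℝ, (∫ y in c..d, ∫ z in e..f, ∫ w in g..h, G x y z w)
      = ∫ z in e..f, ∫ y in c..d, ∫ w in g..h, G x y z w := by
    intro x
    exact swap2 (F := fun y z => ∫ w in g..h, G x y z w)
      ((contA hG g h).comp (show Continuous fun p : ℝ × ℝ =>
        ((x, p.1, p.2) : ℝ × ℝ × ℝ) by fun_prop)) c d e f
  simp only [s1]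
  rw [swap2 (F := fun x z => ∫ y in c..d, ∫ w in g..h, G x y z w)
    (contInt (F := fun (p : ℝ × ℝ) y => ∫ w in g..h, G p.1 y p.2 w)
      ((contA hG g h).comp (show Continuous fun q : (ℝ × ℝ) × ℝ =>
        ((q.1.1, q.2, q.1.2) : ℝ × ℝ × ℝ) by fun_prop)) c d) a b e f]
  have s3 : ∀ z : ℝ, (∫ x in a..b, ∫ y in c..d, ∫ w in g..h, G x y z w)
      = ∫ y in c..d, ∫ x in a..b, ∫ w in g..h, G x y z w := by
    intro z
    exact swap2 (F := fun x y => ∫ w in g..h, G x y z w)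
      ((contA hG g h).comp (show Continuous fun p : ℝ × ℝ =>
        ((p.1, p.2, z) : ℝ × ℝ × ℝ) by fun_prop)) a b c d
  simp only [s3]
  refine intervalIntegral.integral_congr fun x _ => ?_
  refine intervalIntegral.integral_congr fun y _ => ?_
  refine intervalIntegral.integral_congr fun z _ => ?_
  refine intervalIntegral.integral_congr fun w _ => ?_
  exact hsym x y z w

lemma swap24 (hsym : ∀ x y z w : ℝ, G x w z y = G x y z w) (a b c d e f g h : ℝ) :
    J G a b c d e f g h = J G a b g h e f c d := by
  simp only [J]
  have s1 : ∀ x : ℝ, (∫ y in c..d, ∫ z in e..f, ∫ w in g..h, G x y z w)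
      = ∫ z in e..f, ∫ y in c..d, ∫ w in g..h, G x y z w := by
    intro x
    exact swap2 (F := fun y z => ∫ w in g..h, G x y z w)
      ((contA hG g h).comp (show Continuous fun p : ℝ × ℝ =>
        ((x, p.1, p.2) : ℝ × ℝ × ℝ) by fun_prop)) c d e f
  have s2 : ∀ x z : ℝ, (∫ y in c..d, ∫ w in g..h, G x y z w)
      = ∫ w in g..h, ∫ y in c..d, G x y z w := by
    intro x z
    exact swap2 (F := fun y w => G x y z w)
      (hG.comp (show Continuous fun p : ℝ × ℝ =>
        ((x, p.1, z, p.2) : ℝ × ℝ × ℝ × ℝ) by fun_prop)) c d g h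
  have s3 : ∀ x : ℝ, (∫ z in e..f, ∫ w in g..h, ∫ y in c..d, G x y z w)
      = ∫ w in g..h, ∫ z in e..f, ∫ y in c..d, G x y z w := by
    intro x
    exact swap2 (F := fun z w => ∫ y in c..d, G x y z w)
      (contInt (F := fun (p : ℝ × ℝ) y => G x y p.1 p.2)
        (hG.comp (show Continuous fun q : (ℝ × ℝ) × ℝ =>
          ((x, q.2, q.1.1, q.1.2) : ℝ × ℝ × ℝ × ℝ) by fun_prop)) c d) e f g h
  simp only [s1, s2, s3]
  refine intervalIntegral.integral_congr fun x _ => ?_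
  refine intervalIntegral.integral_congr fun y _ => ?_
  refine intervalIntegral.integral_congr fun z _ => ?_
  refine intervalIntegral.integral_congr fun w _ => ?_
  exact hsym x y z w

lemma nested_lb {a₁ b₁ a₂ b₂ a₃ b₃ a₄ b₄ c : ℝ}
    (h₁ : a₁ ≤ b₁) (h₂ : a₂ ≤ b₂) (h₃ : a₃ ≤ b₃) (h₄ : a₄ ≤ b₄)
    (hge : ∀ x ∈ Icc a₁ b₁, ∀ y ∈ Icc a₂ b₂, ∀ z ∈ Icc a₃ b₃, ∀ w ∈ Icc a₄ b₄,
      c ≤ G x y z w) :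
    (b₁ - a₁) * ((b₂ - a₂) * ((b₃ - a₃) * ((b₄ - a₄) * c))) ≤ J G a₁ b₁ a₂ b₂ a₃ b₃ a₄ b₄ := by
  have L4 : ∀ x ∈ Icc a₁ b₁, ∀ y ∈ Icc a₂ b₂, ∀ z ∈ Icc a₃ b₃,
      (b₄ - a₄) * c ≤ ∫ w in a₄..b₄, G x y z w := by
    intro x hx y hy z hz
    have hc : Continuous fun w : ℝ => G x y z w :=
      hG.comp (show Continuous fun w : ℝ => ((x, y, z, w) : ℝ × ℝ × ℝ × ℝ) by fun_prop)
    calc (b₄ - a₄) * c = ∫ _ in a₄..b₄, c := by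
          rw [intervalIntegral.integral_const, smul_eq_mul]
      _ ≤ ∫ w in a₄..b₄, G x y z w := by
          apply intervalIntegral.integral_mono_on h₄ intervalIntegrable_const
            (hc.intervalIntegrable _ _)
          exact fun w hw => hge x hx y hy z hz w hw
  have L3 : ∀ x ∈ Icc a₁ b₁, ∀ y ∈ Icc a₂ b₂,
      (b₃ - a₃) * ((b₄ - a₄) * c) ≤ ∫ z in a₃..b₃, ∫ w in a₄..b₄, G x y z w := by
    intro x hx y hy
    have hc : Continuous fun z : ℝ => ∫ w in a₄..b₄, G x y z w :=
      (contA hG a₄ b₄).comp (show Continuous fun z : ℝ => ((x, y, z) : ℝ × ℝ × ℝ) by fun_prop)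
    calc (b₃ - a₃) * ((b₄ - a₄) * c) = ∫ _ in a₃..b₃, (b₄ - a₄) * c := by
          rw [intervalIntegral.integral_const, smul_eq_mul]
      _ ≤ _ := by
          apply intervalIntegral.integral_mono_on h₃ intervalIntegrable_const
            (hc.intervalIntegrable _ _)
          exact fun z hz => L4 x hx y hy z hz
  have L2 : ∀ x ∈ Icc a₁ b₁,
      (b₂ - a₂) * ((b₃ - a₃) * ((b₄ - a₄) * c))
        ≤ ∫ y in a₂..b₂, ∫ z in a₃..b₃, ∫ w in a₄..b₄, G x y z w := by
    intro x hx
    have hc : Continuous fun y : ℝ => ∫ z in a₃..b₃, ∫ w in a₄..b₄, G x y z w :=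
      (contB hG a₃ b₃ a₄ b₄).comp (show Continuous fun y : ℝ => ((x, y) : ℝ × ℝ) by fun_prop)
    calc (b₂ - a₂) * ((b₃ - a₃) * ((b₄ - a₄) * c))
        = ∫ _ in a₂..b₂, (b₃ - a₃) * ((b₄ - a₄) * c) := by
          rw [intervalIntegral.integral_const, smul_eq_mul]
      _ ≤ _ := by
          apply intervalIntegral.integral_mono_on h₂ intervalIntegrable_const
            (hc.intervalIntegrable _ _)
          exact fun y hy => L3 x hx y hy
  calc (b₁ - a₁) * ((b₂ - a₂) * ((b₃ - a₃) * ((b₄ - a₄) * c)))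
      = ∫ _ in a₁..b₁, (b₂ - a₂) * ((b₃ - a₃) * ((b₄ - a₄) * c)) := by
        rw [intervalIntegral.integral_const, smul_eq_mul]
    _ ≤ J G a₁ b₁ a₂ b₂ a₃ b₃ a₄ b₄ := by
        rw [J]
        apply intervalIntegral.integral_mono_on h₁ intervalIntegrable_const
          ((contC hG a₂ b₂ a₃ b₃ a₄ b₄).intervalIntegrable _ _)
        exact fun x hx => L2 x hx

omit hG

/-- Abstract polarization argument. -/
lemma polarize {T : ℝ → ℝ → ℝ → ℝ → ℝ} {S : Set ℝ} {base : ℝ} (hbase : base ∈ S)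
    (hdiag : ∀ p ∈ S, ∀ q ∈ S, T p q p q = 0)
    (hsymm : ∀ p q r s : ℝ, T p q r s = T r s p q)
    (hadd1 : ∀ p m q r s : ℝ, T p q r s = T p m r s + T m q r s)
    (hadd2 : ∀ p q r m s : ℝ, T p q r s = T p q r m + T p q m s) :
    ∀ p ∈ S, ∀ q ∈ S, ∀ r ∈ S, ∀ s ∈ S, T p q r s = 0 := by
  have nil1 : ∀ p r s : ℝ, T p p r s = 0 := by
    intro p r s; have := hadd1 p p p r s; linarith
  have nil2 : ∀ p q r : ℝ, T p q r r = 0 := by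
    intro p q r; have := hadd2 p q r r r; linarith
  have expand : ∀ p q r s : ℝ, T p q r s
      = T base q base s - T base q base r - (T base p base s - T base p base r) := by
    intro p q r s
    have e1 : T p q r s = T p base r s + T base q r s := hadd1 p base q r s
    have e2q : T base q r s = T base q r base + T base q base s := hadd2 base q r base s
    have e3q : T base q r r = T base q r base + T base q base r := hadd2 base q r base r
    have n2q : T base q r r = 0 := nil2 base q r
    have e2p : T base p r s = T base p r base + T base p base s := hadd2 base p r base s
    have e3p : T base p r r = T base p r base + T base p base r := hadd2 base p r base r
    have n2p : T base p r r = 0 := nil2 base p r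
    have e5 : T p p r s = T p base r s + T base p r s := hadd1 p base p r s
    have n1 : T p p r s = 0 := nil1 p r s
    linarith
  have f0 : ∀ x ∈ S, ∀ y ∈ S, T base x base y = 0 := by
    intro x hx y hy
    have d := hdiag x hx y hy
    have e := expand x y x y
    have fyy : T base y base y = 0 := hdiag base hbase y hy
    have fxx : T base x base x = 0 := hdiag base hbase x hx
    have fsym : T base y base x = T base x base y := hsymm base y base x
    linarith
  intro p hp q hq r hr s hs
  have e := expand p q r s
  rw [f0 q hq s hs, f0 q hq r hr, f0 p hp s hs, f0 p hp r hr] at e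
  linarith

include hG

lemma not_pos {x y z w δ₀ : ℝ} (hδ₀ : 0 < δ₀)
    (hJ : ∀ δ : ℝ, 0 < δ → δ < δ₀ →
      J G (x - δ) (x + δ) (y - δ) (y + δ) (z - δ) (z + δ) (w - δ) (w + δ) = 0) :
    ¬ (0 < G x y z w) := by
  intro hpos
  set c := G x y z w with hc
  have hmem : ((x, y, z, w) : ℝ × ℝ × ℝ × ℝ) ∈
      (fun z : ℝ × ℝ × ℝ × ℝ => G z.1 z.2.1 z.2.2.1 z.2.2.2) ⁻¹' Ioi (c / 2) := by
    simp only [mem_preimage, mem_Ioi]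
    exact half_lt_self hpos
  obtain ⟨η, hη, hball⟩ := Metric.isOpen_iff.1 (isOpen_Ioi.preimage hG) _ hmem
  set δ := min (η / 2) (δ₀ / 2) with hδdef
  have hδpos : 0 < δ := lt_min (by linarith) (by linarith)
  have hδη : δ < η := lt_of_le_of_lt (min_le_left _ _) (by linarith)
  have hδδ₀ : δ < δ₀ := lt_of_le_of_lt (min_le_right _ _) (by linarith)
  have hge : ∀ p ∈ Icc (x - δ) (x + δ), ∀ q ∈ Icc (y - δ) (y + δ),
      ∀ r ∈ Icc (z - δ) (z + δ), ∀ s ∈ Icc (w - δ) (w + δ), c / 2 ≤ G p q r s := by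
    intro p hp q hq r hr s hs
    have hb : ((p, q, r, s) : ℝ × ℝ × ℝ × ℝ) ∈ Metric.ball ((x, y, z, w) : ℝ × ℝ × ℝ × ℝ) η := by
      simp only [Metric.mem_ball, Prod.dist_eq, Real.dist_eq, max_lt_iff]
      refine ⟨?_, ?_, ?_, ?_⟩ <;> rw [abs_lt] <;>
        constructor <;> cases' hp with hp1 hp2 <;> cases' hq with hq1 hq2 <;>
        cases' hr with hr1 hr2 <;> cases' hs with hs1 hs2 <;> linarith
    exact le_of_lt (hball hb)
  have hlb := nested_lb hG (by linarith : x - δ ≤ x + δ) (by linarith : y - δ ≤ y + δ)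
    (by linarith : z - δ ≤ z + δ) (by linarith : w - δ ≤ w + δ) hge
  rw [hJ δ hδpos hδδ₀] at hlb
  have key : (x + δ - (x - δ)) * ((y + δ - (y - δ)) * ((z + δ - (z - δ))
      * ((w + δ - (w - δ)) * (c / 2)))) = 8 * δ ^ 4 * c := by ring
  rw [key] at hlb
  have : (0 : ℝ) < 8 * δ ^ 4 * c := by positivity
  linarith

lemma eval_zero {x y z w δ₀ : ℝ} (hδ₀ : 0 < δ₀)
    (hJ : ∀ δ : ℝ, 0 < δ → δ < δ₀ →
      J G (x - δ) (x + δ) (y - δ) (y + δ) (z - δ) (z + δ) (w - δ) (w + δ) = 0) :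
    G x y z w = 0 := by
  by_contra h
  rcases lt_or_gt_of_ne h with hneg | hpos
  · refine not_pos (G := fun a b c d => -G a b c d)
      (by fun_prop) hδ₀ (fun δ h1 h2 => ?_) (by simpa using hneg)
    rw [J_neg, hJ δ h1 h2, neg_zero]
  · exact not_pos hG hδ₀ hJ hpos

end BoxAux

open BoxAux in
/-- The analytic core of the main theorem: if `H` is continuous on `(0,1)⁴`, symmetric under
the swaps `(u₁,v₁,u₂,v₂) ↦ (u₂,v₁,u₁,v₂)` and `(u₁,v₁,u₂,v₂) ↦ (u₁,v₂,u₂,v₁)`, and all its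
iterated integrals over boxes `[p₁,q₁] × [p₂,q₂] × [p₁,q₁] × [p₂,q₂]` vanish, then `H` is
identically zero on `(0,1)⁴`. -/
theorem eq_zero_of_boxes_integral_eq_zero
    (H : ℝ → ℝ → ℝ → ℝ → ℝ)
    (hcont : ContinuousOn (fun z : ℝ × ℝ × ℝ × ℝ => H z.1 z.2.1 z.2.2.1 z.2.2.2)
      (Ioo (0 : ℝ) 1 ×ˢ Ioo (0 : ℝ) 1 ×ˢ Ioo (0 : ℝ) 1 ×ˢ Ioo (0 : ℝ) 1))
    (hsym1 : ∀ u₁ v₁ u₂ v₂ : ℝ, u₁ ∈ Ioo (0 : ℝ) 1 → v₁ ∈ Ioo (0 : ℝ) 1 →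
      u₂ ∈ Ioo (0 : ℝ) 1 → v₂ ∈ Ioo (0 : ℝ) 1 → H u₂ v₁ u₁ v₂ = H u₁ v₁ u₂ v₂)
    (hsym2 : ∀ u₁ v₁ u₂ v₂ : ℝ, u₁ ∈ Ioo (0 : ℝ) 1 → v₁ ∈ Ioo (0 : ℝ) 1 →
      u₂ ∈ Ioo (0 : ℝ) 1 → v₂ ∈ Ioo (0 : ℝ) 1 → H u₁ v₂ u₂ v₁ = H u₁ v₁ u₂ v₂)
    (hint : ∀ p₁ q₁ p₂ q₂ : ℝ, 0 < p₁ → p₁ < q₁ → q₁ < 1 → 0 < p₂ → p₂ < q₂ → q₂ < 1 →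
      (∫ u₁ in p₁..q₁, ∫ v₁ in p₂..q₂, ∫ u₂ in p₁..q₁, ∫ v₂ in p₂..q₂, H u₁ v₁ u₂ v₂) = 0) :
    ∀ u₁ v₁ u₂ v₂ : ℝ, u₁ ∈ Ioo (0 : ℝ) 1 → v₁ ∈ Ioo (0 : ℝ) 1 →
      u₂ ∈ Ioo (0 : ℝ) 1 → v₂ ∈ Ioo (0 : ℝ) 1 → H u₁ v₁ u₂ v₂ = 0 := by
  intro u₁ v₁ u₂ v₂ hu₁ hv₁ hu₂ hv₂
  obtain ⟨hu₁0, hu₁1⟩ := hu₁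
  obtain ⟨hv₁0, hv₁1⟩ := hv₁
  obtain ⟨hu₂0, hu₂1⟩ := hu₂
  obtain ⟨hv₂0, hv₂1⟩ := hv₂
  set l : ℝ := min (min u₁ v₁) (min u₂ v₂) with hldef
  set r : ℝ := max (max u₁ v₁) (max u₂ v₂) with hrdef
  have hl0 : 0 < l := lt_min (lt_min hu₁0 hv₁0) (lt_min hu₂0 hv₂0)
  have hr1 : r < 1 := max_lt (max_lt hu₁1 hv₁1) (max_lt hu₂1 hv₂1)
  set ε : ℝ := min l (1 - r) / 2 with hεdef
  have hε0 : 0 < ε := by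
    have h := lt_min hl0 (by linarith : (0:ℝ) < 1 - r)
    exact div_pos h two_pos
  have hcoord : ∀ x : ℝ, l ≤ x → x ≤ r → ε < x ∧ x < 1 - ε := by
    intro x h1 h2
    have e1 : ε ≤ l / 2 := by
      have := min_le_left l (1 - r); rw [hεdef]; linarith
    have e2 : ε ≤ (1 - r) / 2 := by
      have := min_le_right l (1 - r); rw [hεdef]; linarith
    constructor <;> linarith
  have hcu₁ := hcoord u₁ (le_trans (min_le_left _ _) (min_le_left _ _))
      (le_trans (le_max_left _ _) (le_max_left _ _))
  have hcv₁ := hcoord v₁ (le_trans (min_le_left _ _) (min_le_right _ _))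
      (le_trans (le_max_right _ _) (le_max_left _ _))
  have hcu₂ := hcoord u₂ (le_trans (min_le_right _ _) (min_le_left _ _))
      (le_trans (le_max_left _ _) (le_max_right _ _))
  have hcv₂ := hcoord v₂ (le_trans (min_le_right _ _) (min_le_right _ _))
      (le_trans (le_max_right _ _) (le_max_right _ _))
  have hεle : ε ≤ 1 - ε := le_of_lt (lt_trans hcu₁.1 hcu₁.2)
  set π : ℝ → ℝ := fun t => max ε (min t (1 - ε)) with hπdef
  have hπcont : Continuous π := continuous_const.max (continuous_id.min continuous_const)
  have hπI : ∀ t, π t ∈ Icc ε (1 - ε) := fun t =>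
    ⟨le_max_left _ _, max_le hεle (min_le_right _ _)⟩
  have hπO : ∀ t, π t ∈ Ioo (0 : ℝ) 1 := fun t =>
    ⟨lt_of_lt_of_le hε0 (hπI t).1, lt_of_le_of_lt (hπI t).2 (by linarith)⟩
  have hπid : ∀ t : ℝ, ε ≤ t → t ≤ 1 - ε → π t = t := by
    intro t h1 h2
    simp only [hπdef]
    rw [min_eq_left h2, max_eq_right h1]
  set G : ℝ → ℝ → ℝ → ℝ → ℝ := fun a b c d => H (π a) (π b) (π c) (π d) with hGdef
  have hGc : Continuous fun q : ℝ × ℝ × ℝ × ℝ => G q.1 q.2.1 q.2.2.1 q.2.2.2 := by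
    apply hcont.comp_continuous
      (f := fun q : ℝ × ℝ × ℝ × ℝ => ((π q.1, π q.2.1, π q.2.2.1, π q.2.2.2) : ℝ × ℝ × ℝ × ℝ))
    · exact (hπcont.comp continuous_fst).prodMk
        ((hπcont.comp (continuous_fst.comp continuous_snd)).prodMk
          ((hπcont.comp (continuous_fst.comp (continuous_snd.comp continuous_snd))).prodMk
            (hπcont.comp (continuous_snd.comp (continuous_snd.comp continuous_snd)))))
    · exact fun q => ⟨hπO _, hπO _, hπO _, hπO _⟩
  have hs1G : ∀ a b c d : ℝ, G c b a d = G a b c d := fun a b c d =>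
    hsym1 (π a) (π b) (π c) (π d) (hπO _) (hπO _) (hπO _) (hπO _)
  have hs2G : ∀ a b c d : ℝ, G a d c b = G a b c d := fun a b c d =>
    hsym2 (π a) (π b) (π c) (π d) (hπO _) (hπO _) (hπO _) (hπO _)
  have hdiagSorted : ∀ p q c d : ℝ, ε ≤ p → p < q → q ≤ 1 - ε → ε ≤ c → c < d → d ≤ 1 - ε →
      J G p q c d p q c d = 0 := by
    intro p q c d h1 h2 h3 h4 h5 h6
    have htrans : J G p q c d p q c d
        = ∫ x in p..q, ∫ y in c..d, ∫ z in p..q, ∫ w in c..d, H x y z w := by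
      rw [J]
      refine intervalIntegral.integral_congr fun x hx => ?_
      refine intervalIntegral.integral_congr fun y hy => ?_
      refine intervalIntegral.integral_congr fun z hz => ?_
      refine intervalIntegral.integral_congr fun w hw => ?_
      rw [uIcc_of_le h2.le] at hx hz
      rw [uIcc_of_le h5.le] at hy hw
      show H (π x) (π y) (π z) (π w) = H x y z w
      rw [hπid x (le_trans h1 hx.1) (le_trans hx.2 h3),
          hπid y (le_trans h4 hy.1) (le_trans hy.2 h6),
          hπid z (le_trans h1 hz.1) (le_trans hz.2 h3),
          hπid w (le_trans h4 hw.1) (le_trans hw.2 h6)]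
    rw [htrans]
    exact hint p q c d (lt_of_lt_of_le hε0 h1) h2 (lt_of_le_of_lt h3 (by linarith))
      (lt_of_lt_of_le hε0 h4) h5 (lt_of_le_of_lt h6 (by linarith))
  have hdiagAll : ∀ p q c d : ℝ, p ∈ Icc ε (1 - ε) → q ∈ Icc ε (1 - ε) →
      c ∈ Icc ε (1 - ε) → d ∈ Icc ε (1 - ε) → J G p q c d p q c d = 0 := by
    have sorted : ∀ p q c d : ℝ, p ∈ Icc ε (1 - ε) → q ∈ Icc ε (1 - ε) →
        c ∈ Icc ε (1 - ε) → d ∈ Icc ε (1 - ε) → p ≤ q → c ≤ d →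
        J G p q c d p q c d = 0 := by
      intro p q c d hp hq hc hd hpq hcd
      rcases eq_or_lt_of_le hpq with he | hlt
      · rw [← he]; simp [J]
      · rcases eq_or_lt_of_le hcd with he2 | hlt2
        · rw [← he2]; simp [J]
        · exact hdiagSorted p q c d hp.1 hlt hq.2 hc.1 hlt2 hd.2
    intro p q c d hp hq hc hd
    rcases le_total p q with h1 | h1 <;> rcases le_total c d with h2 | h2
    · exact sorted p q c d hp hq hc hd h1 h2
    · rw [J_flip2, J_flip4, neg_neg]
      exact sorted p q d c hp hq hd hc h1 h2
    · rw [J_flip1, J_flip3, neg_neg]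
      exact sorted q p c d hq hp hc hd h1 h2
    · rw [J_flip1, J_flip3, neg_neg, J_flip2, J_flip4, neg_neg]
      exact sorted q p d c hq hp hd hc h1 h2
  have hbase : ε ∈ Icc ε (1 - ε) := ⟨le_refl _, hεle⟩
  have claimA : ∀ c ∈ Icc ε (1 - ε), ∀ d ∈ Icc ε (1 - ε), ∀ p ∈ Icc ε (1 - ε),
      ∀ q ∈ Icc ε (1 - ε), ∀ r' ∈ Icc ε (1 - ε), ∀ s ∈ Icc ε (1 - ε),
      J G p q c d r' s c d = 0 := by
    intro c hc d hd
    refine polarize (T := fun p q r' s => J G p q c d r' s c d) hbase ?_ ?_ ?_ ?_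
    · exact fun p hp q hq => hdiagAll p q c d hp hq hc hd
    · exact fun p q r' s => swap13 hGc hs1G p q c d r' s c d
    · exact fun p m q r' s => J_add1 hGc p m q c d r' s c d
    · exact fun p q r' m s => J_add3 hGc p q c d r' m s c d
  have claimB : ∀ p ∈ Icc ε (1 - ε), ∀ q ∈ Icc ε (1 - ε), ∀ r' ∈ Icc ε (1 - ε),
      ∀ s ∈ Icc ε (1 - ε), ∀ c ∈ Icc ε (1 - ε), ∀ d ∈ Icc ε (1 - ε),
      ∀ g ∈ Icc ε (1 - ε), ∀ h' ∈ Icc ε (1 - ε), J G p q c d r' s g h' = 0 := by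
    intro p hp q hq r' hr' s hs
    refine polarize (T := fun c d g h' => J G p q c d r' s g h') hbase ?_ ?_ ?_ ?_
    · exact fun c hc d hd => claimA c hc d hd p hp q hq r' hr' s hs
    · exact fun c d g h' => swap24 hGc hs2G p q c d r' s g h'
    · exact fun c m d g h' => J_add2 hGc p q c m d r' s g h'
    · exact fun c d g m h' => J_add4 hGc p q c d r' s g m h'
  set δ₀ : ℝ := min (min (min (u₁ - ε) ((1 - ε) - u₁)) (min (v₁ - ε) ((1 - ε) - v₁)))
      (min (min (u₂ - ε) ((1 - ε) - u₂)) (min (v₂ - ε) ((1 - ε) - v₂))) with hδ₀def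
  have hδ₀pos : 0 < δ₀ := by
    refine lt_min (lt_min (lt_min ?_ ?_) (lt_min ?_ ?_)) (lt_min (lt_min ?_ ?_) (lt_min ?_ ?_)) <;>
      [linarith [hcu₁.1]; linarith [hcu₁.2]; linarith [hcv₁.1]; linarith [hcv₁.2];
       linarith [hcu₂.1]; linarith [hcu₂.2]; linarith [hcv₂.1]; linarith [hcv₂.2]]
  have happ : G u₁ v₁ u₂ v₂ = 0 := by
    apply eval_zero hGc hδ₀pos
    intro δ h1 h2
    have m1 : δ₀ ≤ u₁ - ε := (min_le_left _ _).trans ((min_le_left _ _).trans (min_le_left _ _))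
    have m2 : δ₀ ≤ (1 - ε) - u₁ := (min_le_left _ _).trans ((min_le_left _ _).trans (min_le_right _ _))
    have m3 : δ₀ ≤ v₁ - ε := (min_le_left _ _).trans ((min_le_right _ _).trans (min_le_left _ _))
    have m4 : δ₀ ≤ (1 - ε) - v₁ := (min_le_left _ _).trans ((min_le_right _ _).trans (min_le_right _ _))
    have m5 : δ₀ ≤ u₂ - ε := (min_le_right _ _).trans ((min_le_left _ _).trans (min_le_left _ _))
    have m6 : δ₀ ≤ (1 - ε) - u₂ := (min_le_right _ _).trans ((min_le_left _ _).trans (min_le_right _ _))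
    have m7 : δ₀ ≤ v₂ - ε := (min_le_right _ _).trans ((min_le_right _ _).trans (min_le_left _ _))
    have m8 : δ₀ ≤ (1 - ε) - v₂ := (min_le_right _ _).trans ((min_le_right _ _).trans (min_le_right _ _))
    exact claimB (u₁ - δ) ⟨by linarith, by linarith⟩ (u₁ + δ) ⟨by linarith, by linarith⟩
      (u₂ - δ) ⟨by linarith, by linarith⟩ (u₂ + δ) ⟨by linarith, by linarith⟩
      (v₁ - δ) ⟨by linarith, by linarith⟩ (v₁ + δ) ⟨by linarith, by linarith⟩
      (v₂ - δ) ⟨by linarith, by linarith⟩ (v₂ + δ) ⟨by linarith, by linarith⟩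
  have hfin : G u₁ v₁ u₂ v₂ = H u₁ v₁ u₂ v₂ := by
    show H (π u₁) (π v₁) (π u₂) (π v₂) = H u₁ v₁ u₂ v₂
    rw [hπid u₁ hcu₁.1.le hcu₁.2.le, hπid v₁ hcv₁.1.le hcv₁.2.le,
        hπid u₂ hcu₂.1.le hcu₂.2.le, hπid v₂ hcv₂.1.le hcv₂.2.le]
  rw [← hfin]
  exact happ
end

section
/- Let (X,Y) be a random vector on ℝ² whose law has a jointly continuous, strictly positive probability density function, and let F_X, F_Y denote the marginal cumulative distribution functions of X and Y. Then X and Y are independent if and only if for every choice of quantile splits 0 < p₁ < q₁ < 1 and 0 < p₂ < q₂ < 1 and the corresponding quantile set A, the conditional covariance Cov_A[F_X(X), F_Y(Y)] equals 0 (i.e., the conditional Spearman's ρ on every quantile set vanishes). -/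
open MeasureTheory ProbabilityTheory Set
open Filter Topology
open scoped NNReal ENNReal

noncomputable def dblInt (Φ : ℝ → ℝ → ℝ) (p q r s : ℝ) : ℝ :=
  ∫ u in p..q, ∫ v in r..s, Φ u v

lemma integral_lin4 {a b : ℝ} {f₁ f₂ f₃ f₄ : ℝ → ℝ}
    (h₁ : Continuous f₁) (h₂ : Continuous f₂) (h₃ : Continuous f₃) (h₄ : Continuous f₄)
    (c₁ c₂ c₃ c₄ : ℝ) :
    ∫ u in a..b, (c₁ * f₁ u + c₂ * f₂ u + c₃ * f₃ u + c₄ * f₄ u)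
      = c₁ * (∫ u in a..b, f₁ u) + c₂ * (∫ u in a..b, f₂ u)
        + c₃ * (∫ u in a..b, f₃ u) + c₄ * (∫ u in a..b, f₄ u) := by
  have i₁ := (h₁.intervalIntegrable (μ := volume) a b).const_mul c₁
  have i₂ := (h₂.intervalIntegrable (μ := volume) a b).const_mul c₂
  have i₃ := (h₃.intervalIntegrable (μ := volume) a b).const_mul c₃
  have i₄ := (h₄.intervalIntegrable (μ := volume) a b).const_mul c₄
  rw [intervalIntegral.integral_add (i₁.add i₂ |>.add i₃) i₄,
    intervalIntegral.integral_add (i₁.add i₂) i₃,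
    intervalIntegral.integral_add i₁ i₂,
    intervalIntegral.integral_const_mul, intervalIntegral.integral_const_mul,
    intervalIntegral.integral_const_mul, intervalIntegral.integral_const_mul]

section Key

variable (A B w : ℝ → ℝ)

noncomputable def keyPhi : ℝ → ℝ → ℝ := fun u v => (w u - w v) * (A v * B u - A u * B v)

variable {A B w}

lemma keyPhi_cont (hA : Continuous A) (hB : Continuous B) (hw : Continuous w) :
    Continuous (Function.uncurry (keyPhi A B w)) := by
  apply Continuous.mul
  · exact (hw.comp continuous_fst).sub (hw.comp continuous_snd)
  · exact ((hA.comp continuous_snd).mul (hB.comp continuous_fst)).sub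
      ((hA.comp continuous_fst).mul (hB.comp continuous_snd))

lemma keyPhi_symm (u v : ℝ) : keyPhi A B w u v = keyPhi A B w v u := by
  simp only [keyPhi]; ring

lemma keyPhi_sq (hA : Continuous A) (hB : Continuous B) (hw : Continuous w)
    (p q : ℝ) :
    dblInt (keyPhi A B w) p q p q
      = 2 * ((∫ u in p..q, A u) * (∫ u in p..q, w u * B u)
        - (∫ u in p..q, w u * A u) * (∫ u in p..q, B u)) := by
  have hwB : Continuous (fun u => w u * B u) := hw.mul hB
  have hwA : Continuous (fun u => w u * A u) := hw.mul hA
  have hin : ∀ u : ℝ, (∫ v in p..q, keyPhi A B w u v)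
      = (w u * B u) * (∫ v in p..q, A v) + (-(w u * A u)) * (∫ v in p..q, B v)
        + (-B u) * (∫ v in p..q, w v * A v) + (A u) * (∫ v in p..q, w v * B v) := by
    intro u
    rw [show (fun v => keyPhi A B w u v) = fun v =>
        ((w u * B u) * A v + (-(w u * A u)) * B v + (-B u) * (w v * A v)
          + (A u) * (w v * B v)) by funext v; simp only [keyPhi]; ring]
    exact integral_lin4 hA hB hwA hwB _ _ _ _
  unfold dblInt
  rw [intervalIntegral.integral_congr (fun u _ => hin u)]
  rw [show (fun u => (w u * B u) * (∫ v in p..q, A v) + (-(w u * A u)) * (∫ v in p..q, B v)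
        + (-B u) * (∫ v in p..q, w v * A v) + (A u) * (∫ v in p..q, w v * B v))
      = fun u => ((∫ v in p..q, A v) * (w u * B u) + (-(∫ v in p..q, B v)) * (w u * A u)
        + (-(∫ v in p..q, w v * A v)) * B u + (∫ v in p..q, w v * B v) * A u)
    by funext u; ring]
  rw [integral_lin4 hwB hwA hB hA]
  ring

end Key

section PhiZero

variable {Φ : ℝ → ℝ → ℝ}

lemma contCurry (hc : Continuous (Function.uncurry Φ)) (u : ℝ) : Continuous (Φ u) := by
  have := hc.comp (Continuous.prodMk_right u)
  simpa [Function.uncurry, Function.comp_def] using this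

lemma contInner (hc : Continuous (Function.uncurry Φ)) (r s : ℝ) :
    Continuous (fun u => ∫ v in r..s, Φ u v) :=
  intervalIntegral.continuous_parametric_intervalIntegral_of_continuous' hc r s

lemma dblInt_hsplit (hc : Continuous (Function.uncurry Φ)) (x m y u v : ℝ) :
    dblInt Φ x m u v + dblInt Φ m y u v = dblInt Φ x y u v :=
  intervalIntegral.integral_add_adjacent_intervals
    (((contInner hc u v)).intervalIntegrable (μ := volume) x m)
    (((contInner hc u v)).intervalIntegrable (μ := volume) m y)

lemma dblInt_vsplit (hc : Continuous (Function.uncurry Φ)) (x y u m v : ℝ) :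
    dblInt Φ x y u m + dblInt Φ x y m v = dblInt Φ x y u v := by
  unfold dblInt
  rw [← intervalIntegral.integral_add
    (((contInner hc u m)).intervalIntegrable (μ := volume) x y)
    (((contInner hc m v)).intervalIntegrable (μ := volume) x y)]
  apply intervalIntegral.integral_congr
  intro t _
  exact intervalIntegral.integral_add_adjacent_intervals
    (((contCurry hc t)).intervalIntegrable (μ := volume) u m)
    (((contCurry hc t)).intervalIntegrable (μ := volume) m v)

lemma dblInt_cross (hc : Continuous (Function.uncurry Φ))
    (hsq : ∀ p q : ℝ, dblInt Φ p q p q = 0) (p q r s : ℝ) :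
    dblInt Φ p q r s + dblInt Φ r s p q = 0 := by
  have H := dblInt_hsplit (Φ := Φ) hc
  have V := dblInt_vsplit (Φ := Φ) hc
  have e1 : dblInt Φ p s p s = 0 := hsq p s
  have e2 : dblInt Φ p r p r = 0 := hsq p r
  have e3 : dblInt Φ q s q s = 0 := hsq q s
  have e4 : dblInt Φ q r q r = 0 := hsq q r
  -- expand the four squares with cut points q and r
  have h1 := H p q s r s   -- p q + q s = p s (inner r s)
  have h2 := H p q r r s
  have h3 := H p q q r s
  have hps1 := H p q s p s
  have hps2 := H q r s p s
  have hps_in1 := V p q p q s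
  have hps_in2 := V p q q r s
  have hqr_in1 := V q r p q s
  have hqr_in2 := V q r q r s
  have hrs_in1 := V r s p q s
  have hrs_in2 := V r s q r s
  have hpr1 := H p q r p r
  have hpr_in1 := V p q p q r
  have hpr_in2 := V q r p q r
  have hqs1 := H q r s q s
  have hqs_in1 := V q r q r s
  have hqs_in2 := V r s q r s
  linarith

lemma dblInt_lower (hc : Continuous (Function.uncurry Φ)) {p r δ : ℝ} (hδ : 0 < δ) {m : ℝ}
    (hb : ∀ u ∈ Icc p (p + δ), ∀ v ∈ Icc r (r + δ), m ≤ Φ u v) :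
    m * δ * δ ≤ dblInt Φ p (p + δ) r (r + δ) := by
  have hle1 : p ≤ p + δ := by linarith
  have hle2 : r ≤ r + δ := by linarith
  have hinner : ∀ u ∈ Icc p (p + δ), m * δ ≤ ∫ v in r..(r + δ), Φ u v := by
    intro u hu
    have := intervalIntegral.integral_mono_on hle2
      (intervalIntegrable_const (μ := volume) (c := m))
      (((contCurry hc u)).intervalIntegrable (μ := volume) r (r + δ))
      (fun v hv => hb u hu v hv)
    simpa [mul_comm] using this
  have := intervalIntegral.integral_mono_on hle1
    (intervalIntegrable_const (μ := volume) (c := m * δ))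
    (((contInner hc r (r + δ))).intervalIntegrable (μ := volume) p (p + δ))
    hinner
  unfold dblInt
  have h0 : (∫ _ in p..(p + δ), (m * δ) : ℝ) = δ * (m * δ) := by simp; ring
  rw [h0] at this
  nlinarith [this]

lemma dblInt_neg (hc : Continuous (Function.uncurry Φ)) (p q r s : ℝ) :
    dblInt (fun u v => -Φ u v) p q r s = -dblInt Φ p q r s := by
  unfold dblInt
  rw [← intervalIntegral.integral_neg]
  apply intervalIntegral.integral_congr
  intro t _
  exact intervalIntegral.integral_neg

lemma phi_not_pos (hc : Continuous (Function.uncurry Φ))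
    (hsymm : ∀ u v, Φ u v = Φ v u)
    (hsq : ∀ p q : ℝ, dblInt Φ p q p q = 0) {a b : ℝ} (hab : a < b) :
    Φ a b ≤ 0 := by
  by_contra hpos
  push_neg at hpos
  set c := Φ a b with hc'
  have hopen : IsOpen {x : ℝ × ℝ | c / 2 < Function.uncurry Φ x} :=
    isOpen_lt continuous_const hc
  have hmem : (a, b) ∈ {x : ℝ × ℝ | c / 2 < Function.uncurry Φ x} := by
    simp only [mem_setOf_eq, Function.uncurry]
    linarith
  obtain ⟨U, V, hU, hV, haU, hbV, hUV⟩ := isOpen_prod_iff.mp hopen a b hmem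
  obtain ⟨ε₁, hε₁, hball₁⟩ := Metric.isOpen_iff.mp hU a haU
  obtain ⟨ε₂, hε₂, hball₂⟩ := Metric.isOpen_iff.mp hV b hbV
  set δ : ℝ := min (min ε₁ ε₂ / 2) (b - a) with hδdef
  have hδpos : 0 < δ := by
    apply lt_min
    · positivity
    · linarith
  have hδb : a + δ ≤ b := by
    have : δ ≤ b - a := min_le_right _ _
    linarith
  have hsub1 : Icc a (a + δ) ⊆ U := by
    intro x hx
    apply hball₁
    simp only [Metric.mem_ball, Real.dist_eq]
    have h1 : δ ≤ min ε₁ ε₂ / 2 := min_le_left _ _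
    have h2 : min ε₁ ε₂ ≤ ε₁ := min_le_left _ _
    have := hx.1; have := hx.2
    rw [abs_lt]; constructor <;> nlinarith [hε₁, hε₂]
  have hsub2 : Icc b (b + δ) ⊆ V := by
    intro x hx
    apply hball₂
    simp only [Metric.mem_ball, Real.dist_eq]
    have h1 : δ ≤ min ε₁ ε₂ / 2 := min_le_left _ _
    have h2 : min ε₁ ε₂ ≤ ε₂ := min_le_right _ _
    have := hx.1; have := hx.2
    rw [abs_lt]; constructor <;> nlinarith [hε₁, hε₂]
  have hbound : ∀ u ∈ Icc a (a + δ), ∀ v ∈ Icc b (b + δ), c / 2 ≤ Φ u v := by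
    intro u hu v hv
    have : (u, v) ∈ U ×ˢ V := ⟨hsub1 hu, hsub2 hv⟩
    have := hUV this
    simp only [mem_setOf_eq, Function.uncurry] at this
    linarith
  have hbound' : ∀ u ∈ Icc b (b + δ), ∀ v ∈ Icc a (a + δ), c / 2 ≤ Φ u v := by
    intro u hu v hv
    rw [hsymm]
    exact hbound v hv u hu
  have h13 := dblInt_lower hc hδpos hbound
  have h31 := dblInt_lower hc hδpos hbound'
  have hcross := dblInt_cross hc hsq a (a + δ) b (b + δ)
  nlinarith [mul_pos (mul_pos (by linarith : (0:ℝ) < c / 2) hδpos) hδpos]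

lemma phi_zero (hc : Continuous (Function.uncurry Φ))
    (hsymm : ∀ u v, Φ u v = Φ v u)
    (hsq : ∀ p q : ℝ, dblInt Φ p q p q = 0) (hdiag : ∀ a, Φ a a = 0) (a b : ℝ) :
    Φ a b = 0 := by
  have hneg : ∀ x y : ℝ, x < y → Φ x y ≤ 0 := fun x y h => phi_not_pos hc hsymm hsq h
  have hpos : ∀ x y : ℝ, x < y → 0 ≤ Φ x y := by
    intro x y h
    have := phi_not_pos (Φ := fun u v => -Φ u v) (hc.neg)
      (fun u v => by simp [hsymm u v])
      (fun p q => by rw [dblInt_neg hc, hsq p q, neg_zero]) h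
    simpa using this
  rcases lt_trichotomy a b with h | h | h
  · exact le_antisymm (hneg a b h) (hpos a b h)
  · subst h
    exact hdiag a
  · rw [hsymm]
    exact le_antisymm (hneg b a h) (hpos b a h)

end PhiZero

lemma key_ratio {A B w : ℝ → ℝ} (hA : Continuous A) (hB : Continuous B)
    (hw : Continuous w) (hwi : Function.Injective w)
    (h : ∀ p q : ℝ, p < q →
      (∫ u in p..q, A u) * (∫ u in p..q, w u * B u) =
      (∫ u in p..q, w u * A u) * (∫ u in p..q, B u)) :
    ∀ u v, A v * B u = A u * B v := by
  have hc := keyPhi_cont hA hB hw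
  have hsq : ∀ p q : ℝ, dblInt (keyPhi A B w) p q p q = 0 := by
    intro p q
    rw [keyPhi_sq hA hB hw p q]
    rcases lt_trichotomy p q with hpq | hpq | hpq
    · rw [h p q hpq]; ring
    · subst hpq; simp
    · have := h q p hpq
      rw [intervalIntegral.integral_symm (f := A) q p,
        intervalIntegral.integral_symm (f := fun u => w u * B u) q p,
        intervalIntegral.integral_symm (f := fun u => w u * A u) q p,
        intervalIntegral.integral_symm (f := B) q p]
      nlinarith [this]
  have hz := phi_zero hc (keyPhi_symm) hsq (fun a => by simp [keyPhi])
  intro u v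
  rcases eq_or_ne u v with rfl | huv
  · ring
  · have := hz u v
    simp only [keyPhi] at this
    have hwne : w u - w v ≠ 0 := sub_ne_zero_of_ne (fun hh => huv (hwi hh))
    have := mul_eq_zero.mp this
    rcases this with h' | h'
    · exact absurd h' hwne
    · linarith [sub_eq_zero.mp h']

section CdfFacts

variable {m : Measure ℝ} [IsProbabilityMeasure m]

lemma cdf_diff_toReal {a b : ℝ} (hab : a ≤ b) :
    (m (Iic b)).toReal = (m (Iic a)).toReal + (m (Ioc a b)).toReal := by
  rw [← Set.Iic_union_Ioc_eq_Iic hab,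
    measure_union (Set.Iic_disjoint_Ioc le_rfl) measurableSet_Ioc,
    ENNReal.toReal_add (measure_ne_top m _) (measure_ne_top m _)]

lemma cdf_strictMono_of_pos (hpos : ∀ a b : ℝ, a < b → 0 < m (Ioc a b)) :
    StrictMono (fun x => (m (Iic x)).toReal) := by
  intro a b hab
  have := cdf_diff_toReal (m := m) hab.le
  have hp : 0 < (m (Ioc a b)).toReal :=
    ENNReal.toReal_pos (hpos a b hab).ne' (measure_ne_top m _)
  simp only []
  linarith

lemma cdf_continuous_of_atomless (hatom : ∀ x : ℝ, m {x} = 0) :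
    Continuous (fun x => (m (Iic x)).toReal) := by
  rw [continuous_iff_continuousAt]
  intro x₀
  have hmono : Monotone (fun x => (m (Iic x)).toReal) := by
    intro a b hab
    exact ENNReal.toReal_mono (measure_ne_top m _) (measure_mono (Iic_subset_Iic.mpr hab))
  have hiInter : (⋂ n : ℕ, Ioc (x₀ - 1/(n+1)) (x₀ + 1/(n+1))) = {x₀} := by
    ext x
    simp only [mem_iInter, mem_Ioc, mem_singleton_iff]
    constructor
    · intro hx
      have h1 : x ≤ x₀ := by
        by_contra hgt
        push_neg at hgt
        obtain ⟨n, hn⟩ := exists_nat_one_div_lt (show 0 < x - x₀ by linarith)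
        have h' : (1:ℝ)/(n+1) < x - x₀ := by exact_mod_cast hn
        linarith [(hx n).2]
      have h2 : x₀ ≤ x := by
        by_contra hgt
        push_neg at hgt
        obtain ⟨n, hn⟩ := exists_nat_one_div_lt (show 0 < x₀ - x by linarith)
        have h' : (1:ℝ)/(n+1) < x₀ - x := by exact_mod_cast hn
        linarith [(hx n).1]
      linarith
    · rintro rfl
      intro n
      have : (0:ℝ) < 1/(n+1) := by positivity
      constructor <;> linarith
  have htend : Filter.Tendsto (fun n : ℕ => m (Ioc (x₀ - 1/(n+1)) (x₀ + 1/(n+1)) )) Filter.atTop (nhds 0) := by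
    have := MeasureTheory.tendsto_measure_iInter_atTop (μ := m)
      (s := fun n : ℕ => Ioc (x₀ - 1/(n+1)) (x₀ + 1/(n+1)))
      (fun n => measurableSet_Ioc.nullMeasurableSet)
      (fun i j hij => by
        apply Ioc_subset_Ioc <;>
        · have h1 : (1:ℝ)/(j+1) ≤ 1/(i+1) := by
            apply one_div_le_one_div_of_le <;> [positivity; exact_mod_cast by omega]
          linarith)
      ⟨0, measure_ne_top m _⟩
    rw [hiInter, hatom x₀] at this
    exact this
  have htendR : Filter.Tendsto (fun n : ℕ => (m (Ioc (x₀ - 1/(n+1)) (x₀ + 1/(n+1)))).toReal)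
      Filter.atTop (nhds 0) := by
    have := (ENNReal.tendsto_toReal (by simp : (0:ENNReal) ≠ ⊤)).comp htend
    simpa [Function.comp_def] using this
  rw [Metric.continuousAt_iff]
  intro ε hε
  obtain ⟨N, hN⟩ := (Filter.tendsto_atTop'.mp htendR) (Iio ε) (Iio_mem_nhds (by simpa using hε))
  have hNlt : (m (Ioc (x₀ - 1/(N+1)) (x₀ + 1/(N+1)))).toReal < ε := by
    have := hN N le_rfl
    simpa [Real.dist_eq] using this
  refine ⟨1/(N+1), by positivity, fun {x} hx => ?_⟩
  rw [Real.dist_eq] at hx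
  rw [Real.dist_eq]
  rcases le_total x₀ x with hle | hle
  · have hd := cdf_diff_toReal (m := m) hle
    have hsub : Ioc x₀ x ⊆ Ioc (x₀ - 1/(N+1)) (x₀ + 1/(N+1)) := by
      apply Ioc_subset_Ioc
      · linarith [show (0:ℝ) < 1/(N+1) by positivity]
      · rw [abs_lt] at hx; linarith
    have := ENNReal.toReal_mono (measure_ne_top m _) (measure_mono hsub)
    rw [abs_lt]
    constructor <;> nlinarith [ENNReal.toReal_nonneg (a := m (Ioc x₀ x))]
  · have hd := cdf_diff_toReal (m := m) hle
    have hsub : Ioc x x₀ ⊆ Ioc (x₀ - 1/(N+1)) (x₀ + 1/(N+1)) := by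
      apply Ioc_subset_Ioc
      · rw [abs_lt] at hx; linarith
      · linarith [show (0:ℝ) < 1/(N+1) by positivity]
    have := ENNReal.toReal_mono (measure_ne_top m _) (measure_mono hsub)
    rw [abs_lt]
    constructor <;> nlinarith [ENNReal.toReal_nonneg (a := m (Ioc x x₀))]

lemma cdf_surj_of (hatom : ∀ x : ℝ, m {x} = 0) {p : ℝ}
    (hp0 : 0 < p) (hp1 : p < 1) : ∃ x, (m (Iic x)).toReal = p := by
  have hcd : ∀ x, (m (Iic x)).toReal = ProbabilityTheory.cdf m x :=
    fun x => (ProbabilityTheory.cdf_eq_real m x).symm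
  obtain ⟨a, ha⟩ := ((ProbabilityTheory.tendsto_cdf_atBot m).eventually_lt_const hp0).exists
  obtain ⟨b, hb⟩ := ((ProbabilityTheory.tendsto_cdf_atTop m).eventually_const_lt hp1).exists
  have hab : a ≤ b := by
    by_contra hba
    push_neg at hba
    have := ProbabilityTheory.monotone_cdf m hba.le
    linarith
  have hcont : ContinuousOn (fun x => (m (Iic x)).toReal) (Icc a b) :=
    (cdf_continuous_of_atomless hatom).continuousOn
  have hmem : p ∈ Icc ((fun x => (m (Iic x)).toReal) a) ((fun x => (m (Iic x)).toReal) b) := by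
    show p ∈ Icc ((m (Iic a)).toReal) ((m (Iic b)).toReal)
    rw [Set.mem_Icc, hcd a, hcd b]
    exact ⟨ha.le, hb.le⟩
  obtain ⟨x, _, hx⟩ := intermediate_value_Icc hab hcont hmem
  exact ⟨x, hx⟩

end CdfFacts

section DensityFacts

variable {f : ℝ × ℝ → ℝ}

lemma setIntegral_rect (hf_cont : Continuous f) (hf_pos : ∀ p, 0 < f p)
    {g : ℝ × ℝ → ℝ} (hg : Continuous g) {a b c d : ℝ} (hab : a ≤ b) (hcd : c ≤ d) :
    ∫ p in Icc a b ×ˢ Icc c d, g p ∂((volume : Measure (ℝ × ℝ)).withDensity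
        (fun p => ENNReal.ofReal (f p)))
      = ∫ x in a..b, ∫ y in c..d, g (x, y) * f (x, y) := by
  have hmeas : MeasurableSet (Icc a b ×ˢ Icc c d : Set (ℝ × ℝ)) :=
    measurableSet_Icc.prod measurableSet_Icc
  have hd : (fun p => ENNReal.ofReal (f p)) = fun p => (((f p).toNNReal : ℝ≥0) : ℝ≥0∞) := rfl
  rw [hd, setIntegral_withDensity_eq_setIntegral_smul (f := fun p => (f p).toNNReal)
    (measurable_real_toNNReal.comp hf_cont.measurable) g hmeas]
  have hcongr : ∫ p in Icc a b ×ˢ Icc c d, (f p).toNNReal • g p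
      = ∫ p in Icc a b ×ˢ Icc c d, g p * f p := by
    apply setIntegral_congr_fun hmeas
    intro p _
    simp [NNReal.smul_def, Real.coe_toNNReal _ (hf_pos p).le]
    ring
  rw [hcongr]
  have hInt : IntegrableOn (fun p => g p * f p) (Icc a b ×ˢ Icc c d)
      ((volume : Measure ℝ).prod (volume : Measure ℝ)) := by
    rw [← Measure.volume_eq_prod]
    exact (hg.mul hf_cont).continuousOn.integrableOn_compact (isCompact_Icc.prod isCompact_Icc)
  rw [Measure.volume_eq_prod, setIntegral_prod _ hInt]
  rw [intervalIntegral.integral_of_le hab, ← integral_Icc_eq_integral_Ioc]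
  apply setIntegral_congr_fun measurableSet_Icc
  intro x _
  simp only []
  rw [intervalIntegral.integral_of_le hcd, ← integral_Icc_eq_integral_Ioc]

lemma measure_rect_toReal (hf_cont : Continuous f) (hf_pos : ∀ p, 0 < f p)
    {a b c d : ℝ} (hab : a ≤ b) (hcd : c ≤ d) :
    (((volume : Measure (ℝ × ℝ)).withDensity (fun p => ENNReal.ofReal (f p)))
        (Icc a b ×ˢ Icc c d)).toReal
      = ∫ x in a..b, ∫ y in c..d, f (x, y) := by
  have h1 := setIntegral_rect hf_cont hf_pos continuous_const (g := fun _ => (1:ℝ)) hab hcd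
  rw [setIntegral_const] at h1
  simp only [smul_eq_mul, mul_one, one_mul] at h1
  exact h1

lemma dblIntegral_pos (hf_cont : Continuous f) (hf_pos : ∀ p, 0 < f p)
    {g : ℝ × ℝ → ℝ} (hg : Continuous g) (hg_pos : ∀ p, 0 < g p)
    {a b c d : ℝ} (hab : a < b) (hcd : c < d) :
    0 < ∫ x in a..b, ∫ y in c..d, g (x, y) * f (x, y) := by
  have hcont2 : Continuous (Function.uncurry (fun x y => g (x, y) * f (x, y))) := by
    have heq : (Function.uncurry fun x y => g (x, y) * f (x, y)) = fun p => g p * f p :=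
      funext fun p => by simp [Function.uncurry]
    rw [heq]; exact hg.mul hf_cont
  apply intervalIntegral.intervalIntegral_pos_of_pos_on
  · exact (contInner hcont2 c d).intervalIntegrable (μ := volume) a b
  · intro x _
    apply intervalIntegral.intervalIntegral_pos_of_pos_on
    · exact ((contCurry hcont2 x)).intervalIntegrable (μ := volume) c d
    · exact fun y _ => mul_pos (hg_pos _) (hf_pos _)
    · exact hcd
  · exact hab

lemma measure_rect_pos (hf_cont : Continuous f) (hf_pos : ∀ p, 0 < f p)
    {a b c d : ℝ} (hab : a < b) (hcd : c < d) :
    0 < ((volume : Measure (ℝ × ℝ)).withDensity (fun p => ENNReal.ofReal (f p)))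
        (Icc a b ×ˢ Icc c d) := by
  rw [pos_iff_ne_zero]
  intro h0
  have := measure_rect_toReal hf_cont hf_pos hab.le hcd.le
  rw [h0] at this
  have hpos := dblIntegral_pos hf_cont hf_pos (continuous_const (y := (1:ℝ)))
    (fun _ => one_pos) hab hcd
  norm_num at this
  simp only [one_mul] at hpos
  linarith

lemma nu_null_of_volume_null {s : Set (ℝ × ℝ)} (hs : volume s = 0) :
    ((volume : Measure (ℝ × ℝ)).withDensity (fun p => ENNReal.ofReal (f p))) s = 0 :=
  withDensity_absolutelyContinuous _ _ hs

lemma slice_fst_null (x : ℝ) : (volume : Measure (ℝ × ℝ)) ({x} ×ˢ (univ : Set ℝ)) = 0 := by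
  rw [Measure.volume_eq_prod, Measure.prod_prod]
  simp

lemma slice_snd_null (y : ℝ) : (volume : Measure (ℝ × ℝ)) ((univ : Set ℝ) ×ˢ {y}) = 0 := by
  rw [Measure.volume_eq_prod, Measure.prod_prod]
  simp

lemma strip_fst_pos (hf_cont : Continuous f) (hf_pos : ∀ p, 0 < f p) {a b : ℝ} (hab : a < b) :
    0 < ((volume : Measure (ℝ × ℝ)).withDensity (fun p => ENNReal.ofReal (f p)))
        (Ioc a b ×ˢ (univ : Set ℝ)) := by
  have hsub : (Icc ((a+b)/2) b ×ˢ Icc 0 1 : Set (ℝ × ℝ)) ⊆ Ioc a b ×ˢ univ := by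
    apply Set.prod_mono
    · intro x hx
      exact ⟨by linarith [hx.1], hx.2⟩
    · exact subset_univ _
  calc (0:ℝ≥0∞) < _ := measure_rect_pos hf_cont hf_pos (by linarith) (one_pos)
  _ ≤ _ := measure_mono hsub

lemma strip_snd_pos (hf_cont : Continuous f) (hf_pos : ∀ p, 0 < f p) {a b : ℝ} (hab : a < b) :
    0 < ((volume : Measure (ℝ × ℝ)).withDensity (fun p => ENNReal.ofReal (f p)))
        ((univ : Set ℝ) ×ˢ Ioc a b) := by
  have hsub : (Icc 0 1 ×ˢ Icc ((a+b)/2) b : Set (ℝ × ℝ)) ⊆ univ ×ˢ Ioc a b := by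
    apply Set.prod_mono
    · exact subset_univ _
    · intro x hx
      exact ⟨by linarith [hx.1], hx.2⟩
  calc (0:ℝ≥0∞) < _ := measure_rect_pos hf_cont hf_pos (one_pos) (by linarith)
  _ ≤ _ := measure_mono hsub

end DensityFacts

section ProdIndep

variable {dg dh : ℝ → ℝ≥0∞}

lemma nu_rect (hgm : Measurable dg) (hhm : Measurable dh) {s t : Set ℝ}
    (hs : MeasurableSet s) (ht : MeasurableSet t) :
    ((volume : Measure (ℝ × ℝ)).withDensity (fun p => dg p.1 * dh p.2)) (s ×ˢ t)
      = (∫⁻ x in s, dg x) * (∫⁻ y in t, dh y) := by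
  rw [withDensity_apply _ (hs.prod ht), Measure.volume_eq_prod, ← Measure.prod_restrict,
    lintegral_prod_mul hgm.aemeasurable hhm.aemeasurable]

lemma indep_of_prod_density {Ω : Type*} [MeasurableSpace Ω] (P : Measure Ω)
    [IsProbabilityMeasure P] {X Y : Ω → ℝ} (hX : Measurable X) (hY : Measurable Y)
    (hgm : Measurable dg) (hhm : Measurable dh)
    (hlaw : P.map (fun ω => (X ω, Y ω)) =
      (volume : Measure (ℝ × ℝ)).withDensity (fun p => dg p.1 * dh p.2)) :
    IndepFun X Y P := by
  set ν := (volume : Measure (ℝ × ℝ)).withDensity (fun p => dg p.1 * dh p.2) with hν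
  set cG := ∫⁻ x, dg x with hcG
  set cH := ∫⁻ y, dh y with hcH
  have hpair : Measurable (fun ω => (X ω, Y ω)) := hX.prodMk hY
  haveI hprob : IsProbabilityMeasure (P.map (fun ω => (X ω, Y ω))) :=
    Measure.isProbabilityMeasure_map hpair.aemeasurable
  have hnorm : cG * cH = 1 := by
    have h1 : ν univ = 1 := by
      rw [← hlaw]
      exact measure_univ
    rw [show (univ : Set (ℝ × ℝ)) = (univ : Set ℝ) ×ˢ (univ : Set ℝ) by rw [univ_prod_univ]] at h1
    rw [nu_rect hgm hhm MeasurableSet.univ MeasurableSet.univ] at h1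
    simpa [Measure.restrict_univ] using h1
  -- marginals
  have hmapX : P.map X = volume.withDensity (fun x => dg x * cH) := by
    have h1 : P.map X = ν.map Prod.fst := by
      rw [← hlaw, Measure.map_map measurable_fst hpair]
      rfl
    rw [h1]
    ext s hs
    rw [Measure.map_apply measurable_fst hs, show (Prod.fst ⁻¹' s : Set (ℝ × ℝ)) = s ×ˢ univ
      from prod_univ.symm, nu_rect hgm hhm hs MeasurableSet.univ,
      withDensity_apply _ hs, lintegral_mul_const _ hgm]
    congr 1
    simp [Measure.restrict_univ, hcH]
  have hmapY : P.map Y = volume.withDensity (fun y => dh y * cG) := by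
    have h1 : P.map Y = ν.map Prod.snd := by
      rw [← hlaw, Measure.map_map measurable_snd hpair]
      rfl
    rw [h1]
    ext s hs
    rw [Measure.map_apply measurable_snd hs, show (Prod.snd ⁻¹' s : Set (ℝ × ℝ)) = univ ×ˢ s
      from univ_prod.symm, nu_rect hgm hhm MeasurableSet.univ hs,
      withDensity_apply _ hs, lintegral_mul_const _ hhm]
    rw [Measure.restrict_univ]
    ring
  haveI hfinX : IsProbabilityMeasure (P.map X) := Measure.isProbabilityMeasure_map hX.aemeasurable
  haveI hfinY : IsProbabilityMeasure (P.map Y) := Measure.isProbabilityMeasure_map hY.aemeasurable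
  rw [ProbabilityTheory.indepFun_iff_map_prod_eq_prod_map_map hX.aemeasurable hY.aemeasurable]
  rw [hlaw]
  symm
  apply Measure.prod_eq
  intro s t hs ht
  rw [hmapX, hmapY, nu_rect hgm hhm hs ht,
    withDensity_apply _ hs, withDensity_apply _ ht,
    lintegral_mul_const _ hgm, lintegral_mul_const _ hhm]
  have hre : (∫⁻ x in s, dg x) * cH * ((∫⁻ y in t, dh y) * cG)
      = ((∫⁻ x in s, dg x) * (∫⁻ y in t, dh y)) * (cG * cH) := by ring
  rw [hre, hnorm, mul_one]

end ProdIndep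

lemma condCov_eq {Ω : Type*} [MeasurableSpace Ω] (P : Measure Ω) (A : Set Ω) (U V : Ω → ℝ) :
    condCov P A U V = (P A).toReal⁻¹ * (∫ ω in A, U ω * V ω ∂P)
      - ((P A).toReal⁻¹ * ∫ ω in A, U ω ∂P) * ((P A).toReal⁻¹ * ∫ ω in A, V ω ∂P) := by
  unfold condCov
  rw [ProbabilityTheory.cond, integral_smul_measure, integral_smul_measure,
    integral_smul_measure, ENNReal.toReal_inv]
  simp [smul_eq_mul]

/-- Conditional Spearman's ρ and independence: `X` and `Y` are independent if and only if the
conditional covariance of `(F_X(X), F_Y(Y))` vanishes on every quantile set, i.e. the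
conditional Spearman's ρ on every quantile set is zero. -/
theorem independence_iff_conditional_spearman_eq_zero
    {Ω : Type*} [MeasurableSpace Ω] (P : Measure Ω) [IsProbabilityMeasure P]
    (X Y : Ω → ℝ) (hX : Measurable X) (hY : Measurable Y)
    (f : ℝ × ℝ → ℝ) (hf_cont : Continuous f) (hf_pos : ∀ p, 0 < f p)
    (hf_law : Measure.map (fun ω => (X ω, Y ω)) P =
      (volume : Measure (ℝ × ℝ)).withDensity (fun p => ENNReal.ofReal (f p))) :
    IndepFun X Y P ↔
      ∀ p₁ q₁ p₂ q₂ : ℝ, 0 < p₁ → p₁ < q₁ → q₁ < 1 → 0 < p₂ → p₂ < q₂ → q₂ < 1 →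
        condCov P (quantileSet P X Y p₁ q₁ p₂ q₂)
          (fun ω => cdfOf P X (X ω)) (fun ω => cdfOf P Y (Y ω)) = 0 := by
  have hpair : Measurable (fun ω => (X ω, Y ω)) := hX.prodMk hY
  set μX := P.map X with hμX
  set μY := P.map Y with hμY
  haveI : IsProbabilityMeasure μX := Measure.isProbabilityMeasure_map hX.aemeasurable
  haveI : IsProbabilityMeasure μY := Measure.isProbabilityMeasure_map hY.aemeasurable
  -- identification of cdfOf with the marginal cdf
  have hFX : cdfOf P X = fun x => (μX (Iic x)).toReal := by
    funext x
    rw [cdfOf, hμX, Measure.map_apply hX measurableSet_Iic]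
    rfl
  have hFY : cdfOf P Y = fun y => (μY (Iic y)).toReal := by
    funext y
    rw [cdfOf, hμY, Measure.map_apply hY measurableSet_Iic]
    rfl
  -- marginal measures via the density
  have hμX_strip : ∀ s : Set ℝ, MeasurableSet s → μX s =
      ((volume : Measure (ℝ × ℝ)).withDensity (fun p => ENNReal.ofReal (f p)))
        (s ×ˢ (univ : Set ℝ)) := by
    intro s hs
    rw [hμX, Measure.map_apply hX hs, ← hf_law, Measure.map_apply hpair (hs.prod MeasurableSet.univ)]
    congr 1
    ext ω
    simp
  have hμY_strip : ∀ s : Set ℝ, MeasurableSet s → μY s =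
      ((volume : Measure (ℝ × ℝ)).withDensity (fun p => ENNReal.ofReal (f p)))
        ((univ : Set ℝ) ×ˢ s) := by
    intro s hs
    rw [hμY, Measure.map_apply hY hs, ← hf_law, Measure.map_apply hpair (MeasurableSet.univ.prod hs)]
    congr 1
    ext ω
    simp
  have hposX : ∀ a b : ℝ, a < b → 0 < μX (Ioc a b) := by
    intro a b hab
    rw [hμX_strip _ measurableSet_Ioc]
    exact strip_fst_pos hf_cont hf_pos hab
  have hposY : ∀ a b : ℝ, a < b → 0 < μY (Ioc a b) := by
    intro a b hab
    rw [hμY_strip _ measurableSet_Ioc]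
    exact strip_snd_pos hf_cont hf_pos hab
  have hatomX : ∀ x : ℝ, μX {x} = 0 := by
    intro x
    rw [hμX_strip _ (measurableSet_singleton x)]
    exact nu_null_of_volume_null (slice_fst_null x)
  have hatomY : ∀ y : ℝ, μY {y} = 0 := by
    intro y
    rw [hμY_strip _ (measurableSet_singleton y)]
    exact nu_null_of_volume_null (slice_snd_null y)
  have hFXmono : StrictMono (cdfOf P X) := by rw [hFX]; exact cdf_strictMono_of_pos hposX
  have hFYmono : StrictMono (cdfOf P Y) := by rw [hFY]; exact cdf_strictMono_of_pos hposY
  have hFXcont : Continuous (cdfOf P X) := by rw [hFX]; exact cdf_continuous_of_atomless hatomX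
  have hFYcont : Continuous (cdfOf P Y) := by rw [hFY]; exact cdf_continuous_of_atomless hatomY
  have hFXsurj : ∀ p : ℝ, 0 < p → p < 1 → ∃ x, cdfOf P X x = p := by
    rw [hFX]; exact fun p hp0 hp1 => cdf_surj_of hatomX hp0 hp1
  have hFYsurj : ∀ p : ℝ, 0 < p → p < 1 → ∃ x, cdfOf P Y x = p := by
    rw [hFY]; exact fun p hp0 hp1 => cdf_surj_of hatomY hp0 hp1
  have hFXrange : ∀ a : ℝ, 0 < cdfOf P X a ∧ cdfOf P X a < 1 := by
    intro a
    constructor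
    · have h1 : cdfOf P X (a - 1) < cdfOf P X a := hFXmono (by linarith)
      have h2 : 0 ≤ cdfOf P X (a - 1) := by rw [hFX]; exact ENNReal.toReal_nonneg
      linarith
    · have h1 : cdfOf P X a < cdfOf P X (a + 1) := hFXmono (by linarith)
      have h2 : cdfOf P X (a + 1) ≤ 1 := by
        rw [hFX]
        exact ENNReal.toReal_le_of_le_ofReal one_pos.le (by simpa using prob_le_one)
      linarith
  have hFYrange : ∀ a : ℝ, 0 < cdfOf P Y a ∧ cdfOf P Y a < 1 := by
    intro a
    constructor
    · have h1 : cdfOf P Y (a - 1) < cdfOf P Y a := hFYmono (by linarith)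
      have h2 : 0 ≤ cdfOf P Y (a - 1) := by rw [hFY]; exact ENNReal.toReal_nonneg
      linarith
    · have h1 : cdfOf P Y a < cdfOf P Y (a + 1) := hFYmono (by linarith)
      have h2 : cdfOf P Y (a + 1) ≤ 1 := by
        rw [hFY]
        exact ENNReal.toReal_le_of_le_ofReal one_pos.le (by simpa using prob_le_one)
      linarith
  have hqXleft : ∀ a : ℝ, quantileOf P X (cdfOf P X a) = a := fun a =>
    Function.leftInverse_invFun hFXmono.injective a
  have hqYleft : ∀ a : ℝ, quantileOf P Y (cdfOf P Y a) = a := fun a =>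
    Function.leftInverse_invFun hFYmono.injective a
  have hqX : ∀ p : ℝ, 0 < p → p < 1 → cdfOf P X (quantileOf P X p) = p := by
    intro p hp0 hp1
    obtain ⟨x, hx⟩ := hFXsurj p hp0 hp1
    exact Function.invFun_eq ⟨x, hx⟩
  have hqY : ∀ p : ℝ, 0 < p → p < 1 → cdfOf P Y (quantileOf P Y p) = p := by
    intro p hp0 hp1
    obtain ⟨x, hx⟩ := hFYsurj p hp0 hp1
    exact Function.invFun_eq ⟨x, hx⟩
  -- quantile sets are preimages of rectangles
  have hQS : ∀ a b c d : ℝ,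
      quantileSet P X Y (cdfOf P X a) (cdfOf P X b) (cdfOf P Y c) (cdfOf P Y d)
        = (fun ω => (X ω, Y ω)) ⁻¹' (Icc a b ×ˢ Icc c d) := by
    intro a b c d
    ext ω
    simp [quantileSet, hqXleft, hqYleft, and_assoc]
    tauto
  -- transfer of set integrals
  have hTrans : ∀ (φ : ℝ × ℝ → ℝ), Continuous φ → ∀ a b c d : ℝ, a ≤ b → c ≤ d →
      ∫ ω in (fun ω => (X ω, Y ω)) ⁻¹' (Icc a b ×ˢ Icc c d), φ (X ω, Y ω) ∂P
        = ∫ x in a..b, ∫ y in c..d, φ (x, y) * f (x, y) := by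
    intro φ hφ a b c d hab hcd
    rw [← setIntegral_map (measurableSet_Icc.prod measurableSet_Icc)
      (hφ.aestronglyMeasurable) hpair.aemeasurable, hf_law]
    exact setIntegral_rect hf_cont hf_pos hφ hab hcd
  have hPA : ∀ a b c d : ℝ, a ≤ b → c ≤ d →
      (P ((fun ω => (X ω, Y ω)) ⁻¹' (Icc a b ×ˢ Icc c d))).toReal
        = ∫ x in a..b, ∫ y in c..d, f (x, y) := by
    intro a b c d hab hcd
    rw [← Measure.map_apply hpair (measurableSet_Icc.prod measurableSet_Icc), hf_law]
    exact measure_rect_toReal hf_cont hf_pos hab hcd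
  constructor
  · -- forward direction
    intro hindep p₁ q₁ p₂ q₂ hp₁ hpq₁ hq₁ hp₂ hpq₂ hq₂
    set S : Set ℝ := Icc (quantileOf P X p₁) (quantileOf P X q₁) with hS
    set T : Set ℝ := Icc (quantileOf P Y p₂) (quantileOf P Y q₂) with hT
    set A := quantileSet P X Y p₁ q₁ p₂ q₂ with hA
    have hAeq : A = X ⁻¹' S ∩ Y ⁻¹' T := rfl
    have hAmeas : MeasurableSet A := by
      rw [hAeq]
      exact (hX measurableSet_Icc).inter (hY measurableSet_Icc)
    by_cases hA0 : P A = 0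
    · have hzero : P[|A] = 0 := by
        rw [ProbabilityTheory.cond, Measure.restrict_eq_zero.mpr hA0, smul_zero]
      simp [condCov, hzero]
    · rw [condCov_eq]
      beta_reduce
      have key : ∀ (φ ψ : ℝ → ℝ), Measurable φ → Measurable ψ →
          ∫ ω in A, φ (X ω) * ψ (Y ω) ∂P
            = (∫ ω, (S.indicator φ) (X ω) ∂P) * (∫ ω, (T.indicator ψ) (Y ω) ∂P) := by
        intro φ ψ hφ hψ
        have hind : (A.indicator fun ω => φ (X ω) * ψ (Y ω))
            = fun ω => (S.indicator φ) (X ω) * (T.indicator ψ) (Y ω) := by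
          funext ω
          by_cases hω : ω ∈ A
          · rw [indicator_of_mem hω,
              indicator_of_mem (show X ω ∈ S from hω.1),
              indicator_of_mem (show Y ω ∈ T from hω.2)]
          · rw [indicator_of_notMem hω]
            have h' : ¬(X ω ∈ S ∧ Y ω ∈ T) := fun hh => hω ⟨hh.1, hh.2⟩
            rcases not_and_or.mp h' with h | h
            · rw [indicator_of_notMem h, zero_mul]
            · rw [indicator_of_notMem h, mul_zero]
        rw [← integral_indicator hAmeas, hind]
        exact (hindep.comp (hφ.indicator measurableSet_Icc)
          (hψ.indicator measurableSet_Icc)).integral_fun_mul_eq_mul_integral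
          ((hφ.indicator measurableSet_Icc).comp hX).aestronglyMeasurable
          ((hψ.indicator measurableSet_Icc).comp hY).aestronglyMeasurable
      have e1 := key (cdfOf P X) (cdfOf P Y) hFXcont.measurable hFYcont.measurable
      have e2 := key (cdfOf P X) (fun _ => 1) hFXcont.measurable measurable_const
      have e3 := key (fun _ => 1) (cdfOf P Y) measurable_const hFYcont.measurable
      have e4 := key (fun _ => 1) (fun _ => 1) measurable_const measurable_const
      simp only [mul_one, one_mul] at e2 e3 e4
      rw [setIntegral_const] at e4
      simp only [smul_eq_mul, mul_one] at e4
      set Eu := ∫ ω, (S.indicator (cdfOf P X)) (X ω) ∂P with hEu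
      set Ev := ∫ ω, (T.indicator (cdfOf P Y)) (Y ω) ∂P with hEv
      set Es := ∫ ω, (S.indicator (fun _ => (1:ℝ))) (X ω) ∂P with hEs
      set Et := ∫ ω, (T.indicator (fun _ => (1:ℝ))) (Y ω) ∂P with hEt
      have hcne : (P A).toReal ≠ 0 :=
        ENNReal.toReal_ne_zero.mpr ⟨hA0, measure_ne_top P A⟩
      have hEsEt : Es * Et ≠ 0 := by rw [← e4]; exact hcne
      have hEsne : Es ≠ 0 := fun h => hEsEt (by rw [h, zero_mul])
      have hEtne : Et ≠ 0 := fun h => hEsEt (by rw [h, mul_zero])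
      rw [e1, e2, e3, ← measureReal_def, e4]
      field_simp
      ring
  · -- reverse direction
    intro hcov
    have hrect : ∀ a b c d : ℝ, a < b → c < d →
        (∫ x in a..b, ∫ y in c..d, f (x, y))
          * (∫ x in a..b, ∫ y in c..d, cdfOf P X x * cdfOf P Y y * f (x, y))
        = (∫ x in a..b, ∫ y in c..d, cdfOf P X x * f (x, y))
          * (∫ x in a..b, ∫ y in c..d, cdfOf P Y y * f (x, y)) := by
      intro a b c d hab hcd
      have h1 := hcov (cdfOf P X a) (cdfOf P X b) (cdfOf P Y c) (cdfOf P Y d)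
        (hFXrange a).1 (hFXmono hab) (hFXrange b).2
        (hFYrange c).1 (hFYmono hcd) (hFYrange d).2
      rw [hQS a b c d, condCov_eq] at h1
      beta_reduce at h1
      have t1 : ∫ ω in (fun ω => (X ω, Y ω)) ⁻¹' (Icc a b ×ˢ Icc c d),
          cdfOf P X (X ω) * cdfOf P Y (Y ω) ∂P
          = ∫ x in a..b, ∫ y in c..d, cdfOf P X x * cdfOf P Y y * f (x, y) :=
        hTrans (fun p => cdfOf P X p.1 * cdfOf P Y p.2)
          ((hFXcont.comp continuous_fst).mul (hFYcont.comp continuous_snd)) a b c d hab.le hcd.le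
      have t2 : ∫ ω in (fun ω => (X ω, Y ω)) ⁻¹' (Icc a b ×ˢ Icc c d),
          cdfOf P X (X ω) ∂P
          = ∫ x in a..b, ∫ y in c..d, cdfOf P X x * f (x, y) :=
        hTrans (fun p => cdfOf P X p.1)
          (hFXcont.comp continuous_fst) a b c d hab.le hcd.le
      have t3 : ∫ ω in (fun ω => (X ω, Y ω)) ⁻¹' (Icc a b ×ˢ Icc c d),
          cdfOf P Y (Y ω) ∂P
          = ∫ x in a..b, ∫ y in c..d, cdfOf P Y y * f (x, y) :=
        hTrans (fun p => cdfOf P Y p.2)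
          (hFYcont.comp continuous_snd) a b c d hab.le hcd.le
      have t4 := hPA a b c d hab.le hcd.le
      rw [t1, t2, t3, t4] at h1
      have hI1pos : 0 < ∫ x in a..b, ∫ y in c..d, f (x, y) := by
        have := dblIntegral_pos hf_cont hf_pos (g := fun _ => (1:ℝ))
          continuous_const (fun _ => one_pos) hab hcd
        simpa using this
      set I1 := ∫ x in a..b, ∫ y in c..d, f (x, y) with hI1
      set I2 := ∫ x in a..b, ∫ y in c..d, cdfOf P X x * cdfOf P Y y * f (x, y) with hI2
      set I3 := ∫ x in a..b, ∫ y in c..d, cdfOf P X x * f (x, y) with hI3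
      set I4 := ∫ x in a..b, ∫ y in c..d, cdfOf P Y y * f (x, y) with hI4
      have hne : I1 ≠ 0 := hI1pos.ne'
      field_simp at h1
      nlinarith [h1]
    -- first application of the key lemma (in the x variable)
    have hfc : Continuous (Function.uncurry fun x y => f (x, y)) := by
      have heq : (Function.uncurry fun x y => f (x, y)) = f :=
        funext fun p => by simp [Function.uncurry]
      rw [heq]; exact hf_cont
    have hfc2 : Continuous (Function.uncurry fun x y => cdfOf P Y y * f (x, y)) := by
      have heq : (Function.uncurry fun x y => cdfOf P Y y * f (x, y))
          = fun p => cdfOf P Y p.2 * f p := funext fun p => by simp [Function.uncurry]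
      rw [heq]; exact (hFYcont.comp continuous_snd).mul hf_cont
    have h1 : ∀ c d : ℝ, c < d → ∀ u v : ℝ,
        (∫ y in c..d, f (v, y)) * (∫ y in c..d, cdfOf P Y y * f (u, y))
          = (∫ y in c..d, f (u, y)) * (∫ y in c..d, cdfOf P Y y * f (v, y)) := by
      intro c d hcd
      refine key_ratio (A := fun x => ∫ y in c..d, f (x, y))
        (B := fun x => ∫ y in c..d, cdfOf P Y y * f (x, y)) (w := cdfOf P X)
        (contInner hfc c d) (contInner hfc2 c d) hFXcont hFXmono.injective ?_
      intro p q hpq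
      have hr := hrect p q c d hpq hcd
      have E2 : (∫ x in p..q, ∫ y in c..d, cdfOf P X x * cdfOf P Y y * f (x, y))
          = ∫ x in p..q, cdfOf P X x * ∫ y in c..d, cdfOf P Y y * f (x, y) := by
        apply intervalIntegral.integral_congr
        intro x _
        beta_reduce
        rw [← intervalIntegral.integral_const_mul]
        apply intervalIntegral.integral_congr
        intro y _
        beta_reduce
        ring
      have E3 : (∫ x in p..q, ∫ y in c..d, cdfOf P X x * f (x, y))
          = ∫ x in p..q, cdfOf P X x * ∫ y in c..d, f (x, y) := by
        apply intervalIntegral.integral_congr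
        intro x _
        beta_reduce
        rw [← intervalIntegral.integral_const_mul]
      rw [E2, E3] at hr
      exact hr
    -- second application of the key lemma (in the y variable)
    have h2 : ∀ u v s t : ℝ, f (v, t) * f (u, s) = f (v, s) * f (u, t) := by
      intro u v
      refine key_ratio (A := fun y => f (v, y)) (B := fun y => f (u, y)) (w := cdfOf P Y)
        (hf_cont.comp (continuous_const.prodMk continuous_id))
        (hf_cont.comp (continuous_const.prodMk continuous_id))
        hFYcont hFYmono.injective ?_
      intro p q hpq
      have := h1 p q hpq u v
      linarith [this]
    -- the density factorizes, hence independence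
    have f00 : (0:ℝ) < f (0, 0) := hf_pos (0, 0)
    have hfactor : ∀ p : ℝ × ℝ, ENNReal.ofReal (f p)
        = ENNReal.ofReal (f (p.1, 0)) * ENNReal.ofReal (f (0, p.2) / f (0, 0)) := by
      rintro ⟨x, y⟩
      rw [← ENNReal.ofReal_mul (hf_pos (x, 0)).le]
      congr 1
      have hh := h2 x 0 y 0
      have hne : f (0, 0) ≠ 0 := f00.ne'
      symm
      rw [← mul_div_assoc, div_eq_iff hne]
      linear_combination -hh
    have hlaw2 : P.map (fun ω => (X ω, Y ω)) = (volume : Measure (ℝ × ℝ)).withDensity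
        (fun p => (fun x => ENNReal.ofReal (f (x, 0))) p.1
          * (fun y => ENNReal.ofReal (f (0, y) / f (0, 0))) p.2) := by
      rw [hf_law]
      congr 1
      funext p
      exact hfactor p
    exact indep_of_prod_density P hX hY
      (ENNReal.measurable_ofReal.comp
        (hf_cont.comp (continuous_id.prodMk continuous_const)).measurable)
      (ENNReal.measurable_ofReal.comp
        ((hf_cont.comp (continuous_const.prodMk continuous_id)).div_const _).measurable)
      hlaw2
end
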